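/- Let W be a tournament limit and let z be a real number with 1/2 ≤ z ≤ 1 such that t(C₃,W) = (z³ + (1−z)³)/8. Then t(C₄,W) = (z⁴ + (1−z)⁴)/16 if and only if there exists a measurable function f : [0,1] → [0,1/2] such that W(x,y) = 1/2 + f(x) − f(y) for almost every (x,y) ∈ [0,1]² (with respect to Lebesgue measure). -/

import Mathlib

open MeasureTheory Set Function

set_option linter.unusedSectionVars false
set_option linter.unusedVariables false

namespace Stmt15

noncomputable def m01 : Measure ℝ := volume.restrict (Set.Icc 0 1)

instance : IsProbabilityMeasure m01 := ⟨by simp [m01, Real.volume_Icc]⟩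

lemma intg {f : ℝ → ℝ} (hm : AEStronglyMeasurable f m01) {C : ℝ}
    (hb : ∀ x, |f x| ≤ C) : Integrable f m01 :=
  Integrable.mono' (integrable_const C) hm (Filter.Eventually.of_forall (fun x => by
    simpa using hb x))

lemma intg2 {f : ℝ × ℝ → ℝ} (hm : AEStronglyMeasurable f (m01.prod m01)) {C : ℝ}
    (hb : ∀ p, |f p| ≤ C) : Integrable f (m01.prod m01) :=
  Integrable.mono' (integrable_const C) hm (Filter.Eventually.of_forall (fun x => by
    simpa using hb x))

lemma swap_int {F : ℝ → ℝ → ℝ} (hm : Measurable (uncurry F)) {C : ℝ}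
    (hb : ∀ x y, |F x y| ≤ C) :
    ∫ x, ∫ y, F x y ∂m01 ∂m01 = ∫ y, ∫ x, F x y ∂m01 ∂m01 :=
  integral_integral_swap (intg2 hm.aestronglyMeasurable (fun p => hb p.1 p.2))

lemma antisym_zero {F : ℝ → ℝ → ℝ} (hm : Measurable (uncurry F)) {C : ℝ}
    (hb : ∀ x y, |F x y| ≤ C) (ha : ∀ x y, F x y = - F y x) :
    ∫ x, ∫ y, F x y ∂m01 ∂m01 = 0 := by
  have h1 : ∫ x, ∫ y, F x y ∂m01 ∂m01 = - ∫ x, ∫ y, F y x ∂m01 ∂m01 := by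
    rw [← integral_neg]
    congr 1; ext x
    rw [← integral_neg]
    congr 1; ext y
    rw [ha]
  have h2 : ∫ x, ∫ y, F y x ∂m01 ∂m01 = ∫ x, ∫ y, F x y ∂m01 ∂m01 := by
    have := swap_int (F := fun x y => F y x)
      (hm.comp measurable_swap : Measurable (uncurry fun x y => F y x))
      (fun x y => hb y x)
    exact this
  rw [h2] at h1
  linarith

lemma mul_abs_le {a b : ℝ} {c d : ℝ} (ha : |a| ≤ c) (hb : |b| ≤ d) :
    |a * b| ≤ c * d := by
  rw [abs_mul]
  exact mul_le_mul ha hb (abs_nonneg _) ((abs_nonneg a).trans ha)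

section VSec

variable (V : ℝ → ℝ → ℝ)

noncomputable def dd (x : ℝ) : ℝ := ∫ y, V x y ∂m01
noncomputable def qq (x : ℝ) : ℝ := ∫ y, V x y * dd V y ∂m01
noncomputable def GG (a b : ℝ) : ℝ := ∫ u, V a u * V b u ∂m01
noncomputable def cc : ℝ := ∫ x, (dd V x)^2 ∂m01
noncomputable def S2 : ℝ := ∫ x, ∫ u, (GG V x u)^2 ∂m01 ∂m01

variable {V}
variable (hVm : Measurable (uncurry V)) (hVb : ∀ x y, |V x y| ≤ 1/2)
  (hVs : ∀ x y, V x y = - V y x)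

section
include hVm

lemma measurable_Vx (x : ℝ) : Measurable (V x) :=
  hVm.comp measurable_prodMk_left

lemma measurable_Vy (y : ℝ) : Measurable (fun x => V x y) :=
  hVm.comp (measurable_id.prodMk measurable_const)

lemma measurable_dd : Measurable (dd V) :=
  (hVm.stronglyMeasurable.integral_prod_right').measurable

lemma measurable_GG : Measurable (uncurry (GG V)) := by
  have : Measurable (fun p : (ℝ × ℝ) × ℝ => V p.1.1 p.2 * V p.1.2 p.2) := by
    apply Measurable.mul
    · exact hVm.comp ((measurable_fst.comp measurable_fst).prodMk measurable_snd)
    · exact hVm.comp ((measurable_snd.comp measurable_fst).prodMk measurable_snd)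
  exact (this.stronglyMeasurable.integral_prod_right').measurable

lemma measurable_qq : Measurable (qq V) := by
  have : Measurable (fun p : ℝ × ℝ => V p.1 p.2 * dd V p.2) :=
    hVm.mul ((measurable_dd hVm).comp measurable_snd)
  exact (this.stronglyMeasurable.integral_prod_right').measurable

end

section
include hVb

lemma abs_int_le {f : ℝ → ℝ} {C : ℝ} (hb : ∀ x, |f x| ≤ C) :
    |∫ x, f x ∂m01| ≤ C := by
  have h0 : (0:ℝ) ≤ C := (abs_nonneg (f 0)).trans (hb 0)
  have h1 : ‖∫ x, f x ∂m01‖ ≤ C * (m01 Set.univ).toReal :=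
    norm_integral_le_of_norm_le_const (Filter.Eventually.of_forall (fun x => by
      simpa using hb x))
  rw [Real.norm_eq_abs] at h1
  simpa using h1

lemma dd_bound (x : ℝ) : |dd V x| ≤ 1/2 :=
  abs_int_le hVb (hVb x)

lemma GG_bound (a b : ℝ) : |GG V a b| ≤ 1/4 :=
  (abs_int_le hVb (C := 1/2 * (1/2:ℝ))
    (fun u => mul_abs_le (hVb a u) (hVb b u))).trans (by norm_num)

lemma qq_bound (x : ℝ) : |qq V x| ≤ 1/4 :=
  (abs_int_le hVb (C := 1/2 * (1/2:ℝ))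
    (fun y => mul_abs_le (hVb x y) (dd_bound hVb y))).trans (by norm_num)

end

include hVm hVb hVs

lemma int_Vy (y : ℝ) : ∫ x, V x y ∂m01 = - dd V y := by
  have h : ∫ x, V x y ∂m01 = ∫ x, -(V y x) ∂m01 :=
    integral_congr_ae (Filter.Eventually.of_forall (fun x => hVs x y))
  rw [h, integral_neg, dd]

lemma m0 : ∫ x, dd V x ∂m01 = 0 :=
  antisym_zero hVm hVb hVs

lemma Q0 : ∫ x, qq V x ∂m01 = - cc V := by
  have hb : ∀ x y, |V x y * dd V y| ≤ 1/4 := fun x y => by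
    have := mul_abs_le (hVb x y) (dd_bound hVb y); norm_num at this ⊢; linarith
  have hm : Measurable (uncurry fun x y => V x y * dd V y) :=
    hVm.mul ((measurable_dd hVm).comp measurable_snd)
  have h1 : ∫ x, qq V x ∂m01 = ∫ x, ∫ y, V x y * dd V y ∂m01 ∂m01 := rfl
  rw [h1, swap_int hm hb]
  have h2 : ∀ y, ∫ x, V x y * dd V y ∂m01 = - (dd V y)^2 := by
    intro y
    rw [integral_mul_const, int_Vy hVm hVb hVs]
    ring
  rw [integral_congr_ae (Filter.Eventually.of_forall h2), integral_neg, cc]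

lemma E0 : ∫ x, dd V x * qq V x ∂m01 = 0 := by
  have key : ∀ x, dd V x * qq V x = ∫ y, dd V x * V x y * dd V y ∂m01 := by
    intro x
    rw [qq, ← integral_const_mul]
    congr 1; ext y; ring
  rw [integral_congr_ae (Filter.Eventually.of_forall key)]
  apply antisym_zero (C := 1/8)
  · exact (((measurable_dd hVm).comp measurable_fst).mul hVm).mul
      ((measurable_dd hVm).comp measurable_snd)
  · intro x y
    have h := mul_abs_le (mul_abs_le (dd_bound hVb x) (hVb x y)) (dd_bound hVb y)
    norm_num at h ⊢; linarith
  · intro x y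
    rw [hVs x y]; ring

lemma GG_symm (a b : ℝ) : GG V a b = GG V b a :=
  integral_congr_ae (Filter.Eventually.of_forall (fun u => mul_comm _ _))

lemma int_GG (x : ℝ) : ∫ y, GG V y x ∂m01 = - qq V x := by
  have hm : Measurable (uncurry fun y u => V y u * V x u) :=
    hVm.mul (hVm.comp (measurable_const.prodMk measurable_snd))
  have hb : ∀ y u, |V y u * V x u| ≤ 1/4 := fun y u => by
    have := mul_abs_le (hVb y u) (hVb x u); norm_num at this ⊢; linarith
  have h1 : ∫ y, GG V y x ∂m01 = ∫ y, ∫ u, V y u * V x u ∂m01 ∂m01 := rfl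
  rw [h1, swap_int hm hb]
  have h2 : ∀ u, ∫ y, V y u * V x u ∂m01 = - (dd V u) * V x u := by
    intro u
    rw [integral_mul_const, int_Vy hVm hVb hVs]
  rw [integral_congr_ae (Filter.Eventually.of_forall h2), qq, ← integral_neg]
  exact integral_congr_ae (Filter.Eventually.of_forall (fun u => by ring))

-- further global quantities
variable (V) in
noncomputable def sq (x : ℝ) : ℝ := ∫ y, V x y * qq V y ∂m01
variable (V) in
noncomputable def NN (y x : ℝ) : ℝ := ∫ z, V y z * GG V z x ∂m01
variable (V) in
noncomputable def J1 (x : ℝ) : ℝ := ∫ y, NN V y x ∂m01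
variable (V) in
noncomputable def PP (x : ℝ) : ℝ := ∫ y, V x y * NN V y x ∂m01

omit hVm hVb hVs in
lemma intg_mul {f g : ℝ → ℝ} (hf : Measurable f) (hg : Measurable g) {C D : ℝ}
    (hbf : ∀ x, |f x| ≤ C) (hbg : ∀ x, |g x| ≤ D) :
    Integrable (fun z => f z * g z) m01 :=
  intg ((hf.mul hg).aestronglyMeasurable) (fun z => mul_abs_le (hbf z) (hbg z))

omit hVb hVs in
lemma measurable_GGx (x : ℝ) : Measurable (fun y => GG V y x) :=
  (measurable_GG hVm).comp (measurable_id.prodMk measurable_const)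

omit hVb hVs in
lemma measurable_GGx' (x : ℝ) : Measurable (fun y => GG V x y) :=
  (measurable_GG hVm).comp (measurable_const.prodMk measurable_id)

omit hVb hVs in
lemma measurable_sq : Measurable (sq V) := by
  have : Measurable (fun p : ℝ × ℝ => V p.1 p.2 * qq V p.2) :=
    hVm.mul ((measurable_qq hVm).comp measurable_snd)
  exact (this.stronglyMeasurable.integral_prod_right').measurable

omit hVb hVs in
lemma measurable_NNx (x : ℝ) : Measurable (fun y => NN V y x) := by
  have : Measurable (fun p : ℝ × ℝ => V p.1 p.2 * GG V p.2 x) :=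
    hVm.mul ((measurable_GGx hVm x).comp measurable_snd)
  exact (this.stronglyMeasurable.integral_prod_right').measurable

omit hVm hVs in
lemma NN_bound (y x : ℝ) : |NN V y x| ≤ 1/8 :=
  (abs_int_le hVb (C := 1/2 * (1/4:ℝ))
    (fun z => mul_abs_le (hVb y z) (GG_bound hVb z x))).trans (by norm_num)

omit hVm hVs in
lemma sq_bound (x : ℝ) : |sq V x| ≤ 1/8 :=
  (abs_int_le hVb (C := 1/2 * (1/4:ℝ))
    (fun y => mul_abs_le (hVb x y) (qq_bound hVb y))).trans (by norm_num)

lemma sq0 : ∫ x, sq V x ∂m01 = 0 := by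
  have hm : Measurable (uncurry fun x y => V x y * qq V y) :=
    hVm.mul ((measurable_qq hVm).comp measurable_snd)
  have hb : ∀ x y, |V x y * qq V y| ≤ 1/8 := fun x y => by
    have := mul_abs_le (hVb x y) (qq_bound hVb y); norm_num at this ⊢; linarith
  have h1 : ∫ x, sq V x ∂m01 = ∫ x, ∫ y, V x y * qq V y ∂m01 ∂m01 := rfl
  rw [h1, swap_int hm hb]
  have h2 : ∀ y, ∫ x, V x y * qq V y ∂m01 = - (dd V y * qq V y) := by
    intro y
    rw [integral_mul_const, int_Vy hVm hVb hVs]; ring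
  rw [integral_congr_ae (Filter.Eventually.of_forall h2), integral_neg,
    E0 hVm hVb hVs, neg_zero]

lemma A2 (x z : ℝ) : ∫ y, V x y * V y z ∂m01 = - GG V x z := by
  have h : ∀ y, V x y * V y z = -(V x y * V z y) := fun y => by rw [hVs y z]; ring
  rw [integral_congr_ae (Filter.Eventually.of_forall h), integral_neg, GG]

lemma int_NN (y : ℝ) : ∫ x, NN V y x ∂m01 = - sq V y := by
  have hm : Measurable (uncurry fun x z => V y z * GG V z x) := by
    apply Measurable.mul
    · exact (measurable_Vx hVm y).comp measurable_snd
    · exact (measurable_GG hVm).comp (measurable_snd.prodMk measurable_fst)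
  have hb : ∀ x z, |V y z * GG V z x| ≤ 1/8 := fun x z => by
    have := mul_abs_le (hVb y z) (GG_bound hVb z x); norm_num at this ⊢; linarith
  have h1 : ∫ x, NN V y x ∂m01 = ∫ x, ∫ z, V y z * GG V z x ∂m01 ∂m01 := rfl
  rw [h1, swap_int hm hb]
  have h2 : ∀ z, ∫ x, V y z * GG V z x ∂m01 = V y z * (- qq V z) := by
    intro z
    rw [integral_const_mul]
    congr 1
    have : ∀ x, GG V z x = GG V x z := fun x => GG_symm hVm hVb hVs z x
    rw [integral_congr_ae (Filter.Eventually.of_forall this), int_GG hVm hVb hVs]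
  rw [integral_congr_ae (Filter.Eventually.of_forall h2), sq, ← integral_neg]
  exact integral_congr_ae (Filter.Eventually.of_forall (fun z => by ring))

lemma J0 : ∫ x, J1 V x ∂m01 = 0 := by
  have hm : Measurable (uncurry fun x y => NN V y x) := by
    have : Measurable (fun p : ℝ × ℝ => NN V p.2 p.1) := by
      have h2 : Measurable (uncurry (NN V)) := by
        have : Measurable (fun p : (ℝ × ℝ) × ℝ => V p.1.1 p.2 * GG V p.2 p.1.2) := by
          apply Measurable.mul
          · exact hVm.comp ((measurable_fst.comp measurable_fst).prodMk measurable_snd)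
          · exact (measurable_GG hVm).comp
              (measurable_snd.prodMk (measurable_snd.comp measurable_fst))
        exact (this.stronglyMeasurable.integral_prod_right').measurable
      exact h2.comp (measurable_snd.prodMk measurable_fst)
    exact this
  have hb : ∀ x y, |NN V y x| ≤ 1/8 := fun x y => NN_bound hVb y x
  have h1 : ∫ x, J1 V x ∂m01 = ∫ x, ∫ y, NN V y x ∂m01 ∂m01 := rfl
  rw [h1, swap_int hm hb]
  have h2 : ∀ y, ∫ x, NN V y x ∂m01 = - sq V y := int_NN hVm hVb hVs
  rw [integral_congr_ae (Filter.Eventually.of_forall h2), integral_neg, sq0 hVm hVb hVs,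
    neg_zero]

lemma P0 : ∫ x, PP V x ∂m01 = - S2 V := by
  have key : ∀ x, PP V x = - ∫ z, (GG V x z)^2 ∂m01 := by
    intro x
    have h1 : PP V x = ∫ y, ∫ z, V x y * (V y z * GG V z x) ∂m01 ∂m01 := by
      unfold PP NN
      congr 1; ext y
      rw [integral_const_mul]
    have hm : Measurable (uncurry fun y z => V x y * (V y z * GG V z x)) := by
      apply Measurable.mul
      · exact (measurable_Vx hVm x).comp measurable_fst
      · exact hVm.mul ((measurable_GGx hVm x).comp measurable_snd)
    have hb : ∀ y z, |V x y * (V y z * GG V z x)| ≤ (1/2) * ((1/2) * (1/4)) := fun y z =>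
      mul_abs_le (hVb x y) (mul_abs_le (hVb y z) (GG_bound hVb z x))
    rw [h1, swap_int hm hb]
    have h2 : ∀ z, ∫ y, V x y * (V y z * GG V z x) ∂m01 = - ((GG V x z)^2) := by
      intro z
      have hpt : ∀ y, V x y * (V y z * GG V z x) = (V x y * V y z) * GG V z x :=
        fun y => by ring
      rw [integral_congr_ae (Filter.Eventually.of_forall hpt), integral_mul_const,
        A2 hVm hVb hVs, GG_symm hVm hVb hVs z x]
      ring
    rw [integral_congr_ae (Filter.Eventually.of_forall h2), integral_neg]
  rw [integral_congr_ae (Filter.Eventually.of_forall key), integral_neg, S2]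

lemma s0 (x : ℝ) : ∫ y, V x y * GG V y x ∂m01 = 0 := by
  have key : ∀ y, V x y * GG V y x = ∫ z, V x y * (V y z * V x z) ∂m01 := by
    intro y
    rw [GG, integral_const_mul]
  rw [integral_congr_ae (Filter.Eventually.of_forall key)]
  apply antisym_zero (C := (1/2)*((1/2)*(1/2)))
  · apply Measurable.mul
    · exact (measurable_Vx hVm x).comp measurable_fst
    · exact hVm.mul ((measurable_Vx hVm x).comp measurable_snd)
  · exact fun y z => mul_abs_le (hVb x y) (mul_abs_le (hVb y z) (hVb x z))
  · intro y z
    rw [hVs z y]; ring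

omit hVb hVs in
lemma measurable_NN : Measurable (uncurry (NN V)) := by
  have : Measurable (fun p : (ℝ × ℝ) × ℝ => V p.1.1 p.2 * GG V p.2 p.1.2) := by
    apply Measurable.mul
    · exact hVm.comp ((measurable_fst.comp measurable_fst).prodMk measurable_snd)
    · exact (measurable_GG hVm).comp
        (measurable_snd.prodMk (measurable_snd.comp measurable_fst))
  exact (this.stronglyMeasurable.integral_prod_right').measurable

omit hVb hVs in
lemma measurable_J1 : Measurable (J1 V) := by
  have : Measurable (fun p : ℝ × ℝ => NN V p.2 p.1) :=
    (measurable_NN hVm).comp (measurable_snd.prodMk measurable_fst)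
  exact (this.stronglyMeasurable.integral_prod_right').measurable

omit hVb hVs in
lemma measurable_PP : Measurable (PP V) := by
  have : Measurable (fun p : ℝ × ℝ => V p.1 p.2 * NN V p.2 p.1) :=
    hVm.mul ((measurable_NN hVm).comp (measurable_snd.prodMk measurable_fst))
  exact (this.stronglyMeasurable.integral_prod_right').measurable

omit hVm hVs in
lemma J1_bound (x : ℝ) : |J1 V x| ≤ 1/8 :=
  abs_int_le hVb (fun y => NN_bound hVb y x)

omit hVm hVs in
lemma PP_bound (x : ℝ) : |PP V x| ≤ 1/16 :=
  (abs_int_le hVb (C := 1/2 * (1/8:ℝ))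
    (fun y => mul_abs_le (hVb x y) (NN_bound hVb y x))).trans (by norm_num)

omit hVm hVs in
lemma dd2_bound (x : ℝ) : |(dd V x)^2| ≤ 1/4 := by
  have h := dd_bound hVb x
  rw [abs_of_nonneg (sq_nonneg _), ← sq_abs]
  nlinarith [abs_nonneg (dd V x)]

-- integral of sums helpers
omit hVm hVb hVs in
lemma int_add3 {f1 f2 f3 : ℝ → ℝ} (h1 : Integrable f1 m01) (h2 : Integrable f2 m01)
    (h3 : Integrable f3 m01) :
    ∫ z, (f1 z + f2 z + f3 z) ∂m01 = ∫ z, f1 z ∂m01 + ∫ z, f2 z ∂m01 + ∫ z, f3 z ∂m01 := by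
  have e2 := integral_add h1 h2
  have e3 := integral_add (show Integrable (fun z => f1 z + f2 z) m01 from h1.add h2) h3
  rw [e3, e2]

omit hVm hVb hVs in
lemma int_add4 {f1 f2 f3 f4 : ℝ → ℝ} (h1 : Integrable f1 m01) (h2 : Integrable f2 m01)
    (h3 : Integrable f3 m01) (h4 : Integrable f4 m01) :
    ∫ z, (f1 z + f2 z + f3 z + f4 z) ∂m01
      = ∫ z, f1 z ∂m01 + ∫ z, f2 z ∂m01 + ∫ z, f3 z ∂m01 + ∫ z, f4 z ∂m01 := by
  have e2 := integral_add h1 h2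
  have e3 := integral_add (show Integrable (fun z => f1 z + f2 z) m01 from h1.add h2) h3
  have e4 := integral_add
    (show Integrable (fun z => f1 z + f2 z + f3 z) m01 from (h1.add h2).add h3) h4
  rw [e4, e3, e2]

omit hVm hVb hVs in
lemma const_half_bound : ∀ x : ℝ, |(1/2 : ℝ)| ≤ (1/2 : ℝ) :=
  fun _ => abs_le.mpr ⟨by norm_num, by norm_num⟩

-- integrable atoms
omit hVs in
lemma intg_Vx (x : ℝ) : Integrable (V x) m01 :=
  intg (measurable_Vx hVm x).aestronglyMeasurable (hVb x)

omit hVs in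
lemma intg_dd : Integrable (dd V) m01 :=
  intg (measurable_dd hVm).aestronglyMeasurable (dd_bound hVb)

omit hVs in
lemma intg_qq : Integrable (qq V) m01 :=
  intg (measurable_qq hVm).aestronglyMeasurable (qq_bound hVb)

omit hVb hVs in
lemma K2f_meas (x : ℝ) :
    Measurable (fun y => 1/4 + dd V y/2 - dd V x/2 - GG V y x) := by
  apply Measurable.sub
  · apply Measurable.sub
    · exact measurable_const.add ((measurable_dd hVm).div_const 2)
    · exact measurable_const
  · exact measurable_GGx hVm x

omit hVm hVs in
lemma K2f_bound (x : ℝ) : ∀ y, |1/4 + dd V y/2 - dd V x/2 - GG V y x| ≤ 1 := by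
  intro y
  have h1 := abs_le.mp (dd_bound hVb y)
  have h2 := abs_le.mp (dd_bound hVb x)
  have h3 := abs_le.mp (GG_bound hVb y x)
  rw [abs_le]
  constructor <;> [linarith [h1.1, h2.2, h3.2]; linarith [h1.2, h2.1, h3.1]]

include hVm hVb hVs

lemma K2eq (y x : ℝ) : ∫ z, (1/2 + V y z) * (1/2 + V z x) ∂m01
    = 1/4 + dd V y/2 - dd V x/2 - GG V y x := by
  have hpt : ∀ z, (1/2 + V y z) * (1/2 + V z x)
      = (1/4 : ℝ) + V y z * (1/2) + V z x * (1/2) + V y z * V z x := fun z => by ring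
  rw [integral_congr_ae (Filter.Eventually.of_forall hpt),
    int_add4 (integrable_const _)
      (intg_mul (measurable_Vx hVm y) measurable_const (hVb y) (const_half_bound))
      (intg_mul (measurable_Vy hVm x) measurable_const (fun z => hVb z x) (const_half_bound))
      (intg_mul (measurable_Vx hVm y) (measurable_Vy hVm x) (hVb y) (fun z => hVb z x))]
  have h2 : ∫ z, V y z * (1/2 : ℝ) ∂m01 = dd V y * (1/2) := by
    rw [integral_mul_const]; rfl
  have h3 : ∫ z, V z x * (1/2 : ℝ) ∂m01 = - dd V x * (1/2) := by
    rw [integral_mul_const, int_Vy hVm hVb hVs]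
  have h4 : ∫ z, V y z * V z x ∂m01 = - GG V y x := A2 hVm hVb hVs y x
  rw [h2, h3, h4, integral_const]
  simp only [measure_univ, ENNReal.toReal_one, probReal_univ, smul_eq_mul, one_mul]
  ring

lemma intK2 (x : ℝ) : ∫ y, (1/4 + dd V y/2 - dd V x/2 - GG V y x) ∂m01
    = 1/4 - dd V x/2 + qq V x := by
  have hpt : ∀ y, 1/4 + dd V y/2 - dd V x/2 - GG V y x
      = ((1/4 : ℝ) - dd V x/2) + dd V y * (1/2) + (-(GG V y x)) := fun y => by ring
  rw [integral_congr_ae (Filter.Eventually.of_forall hpt),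
    int_add3 (integrable_const _)
      (intg_mul (measurable_dd hVm) measurable_const (dd_bound hVb) (const_half_bound))
      (show Integrable (fun y => -(GG V y x)) m01 from
        (intg (measurable_GGx hVm x).aestronglyMeasurable (fun y => GG_bound hVb y x)).neg)]
  rw [integral_mul_const, m0 hVm hVb hVs, integral_neg, int_GG hVm hVb hVs, integral_const]
  simp only [measure_univ, ENNReal.toReal_one, probReal_univ, smul_eq_mul, one_mul]
  ring

lemma intVK2 (y x : ℝ) : ∫ z, V y z * (1/4 + dd V z/2 - dd V x/2 - GG V z x) ∂m01
    = dd V y * (1/4 - dd V x/2) + qq V y * (1/2) - NN V y x := by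
  have hpt : ∀ z, V y z * (1/4 + dd V z/2 - dd V x/2 - GG V z x)
      = V y z * ((1/4 : ℝ) - dd V x/2) + (V y z * dd V z) * (1/2)
        + (-(V y z * GG V z x)) := fun z => by ring
  rw [integral_congr_ae (Filter.Eventually.of_forall hpt),
    int_add3
      (intg_mul (measurable_Vx hVm y) measurable_const (hVb y)
        (fun _ => le_refl _ : ∀ _ : ℝ, |(1/4 : ℝ) - dd V x/2| ≤ |(1/4 : ℝ) - dd V x/2|))
      (intg_mul (f := fun z => V y z * dd V z) ((measurable_Vx hVm y).mul (measurable_dd hVm)) measurable_const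
        (fun z => mul_abs_le (hVb y z) (dd_bound hVb z)) (const_half_bound))
      (show Integrable (fun z => -(V y z * GG V z x)) m01 from
        (intg_mul (measurable_Vx hVm y) (measurable_GGx hVm x) (hVb y)
          (fun z => GG_bound hVb z x)).neg)]
  rw [integral_mul_const, integral_mul_const, integral_neg]
  have h1 : ∫ z, V y z * dd V z ∂m01 = qq V y := rfl
  have h2 : ∫ z, V y z * GG V z x ∂m01 = NN V y x := rfl
  rw [h1, h2]
  have h3 : ∫ z, V y z ∂m01 = dd V y := rfl
  rw [h3]
  ring

lemma NNxx (x : ℝ) : NN V x x = 0 := s0 hVm hVb hVs x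

lemma E3lem :
    ∫ x, ∫ y, ∫ z, (1/2 + V x y) * (1/2 + V y z) * (1/2 + V z x) ∂m01 ∂m01 ∂m01
      = 1/8 - (3/2) * cc V := by
  have inner1 : ∀ x y, ∫ z, (1/2 + V x y) * (1/2 + V y z) * (1/2 + V z x) ∂m01
      = (1/2 + V x y) * (1/4 + dd V y/2 - dd V x/2 - GG V y x) := by
    intro x y
    have hpt : ∀ z, (1/2 + V x y) * (1/2 + V y z) * (1/2 + V z x)
        = (1/2 + V x y) * ((1/2 + V y z) * (1/2 + V z x)) := fun z => by ring
    rw [integral_congr_ae (Filter.Eventually.of_forall hpt), integral_const_mul,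
      K2eq hVm hVb hVs]
  have inner2 : ∀ x, ∫ y, (1/2 + V x y) * (1/4 + dd V y/2 - dd V x/2 - GG V y x) ∂m01
      = 1/8 + qq V x - (dd V x)^2/2 := by
    intro x
    have hpt : ∀ y, (1/2 + V x y) * (1/4 + dd V y/2 - dd V x/2 - GG V y x)
        = (1/2) * (1/4 + dd V y/2 - dd V x/2 - GG V y x)
          + V x y * (1/4 + dd V y/2 - dd V x/2 - GG V y x) := fun y => by ring
    rw [integral_congr_ae (Filter.Eventually.of_forall hpt),
      integral_add
        ((intg (K2f_meas hVm x).aestronglyMeasurable (K2f_bound hVb x)).const_mul _)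
        (intg_mul (measurable_Vx hVm x) (K2f_meas hVm x) (hVb x) (K2f_bound hVb x)),
      integral_const_mul, intK2 hVm hVb hVs, intVK2 hVm hVb hVs, NNxx hVm hVb hVs]
    ring
  calc ∫ x, ∫ y, ∫ z, (1/2 + V x y) * (1/2 + V y z) * (1/2 + V z x) ∂m01 ∂m01 ∂m01
      = ∫ x, (1/8 + qq V x - (dd V x)^2/2) ∂m01 := by
        apply integral_congr_ae
        apply Filter.Eventually.of_forall
        intro x
        show (∫ y, ∫ z, (1/2 + V x y) * (1/2 + V y z) * (1/2 + V z x) ∂m01 ∂m01)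
          = 1/8 + qq V x - (dd V x)^2/2
        rw [← inner2 x]
        apply integral_congr_ae
        apply Filter.Eventually.of_forall
        intro y
        exact inner1 x y

    _ = 1/8 - (3/2) * cc V := by
        have hpt : ∀ x, 1/8 + qq V x - (dd V x)^2/2
            = (1/8 : ℝ) + qq V x + (dd V x)^2 * (-(1/2)) := fun x => by ring
        rw [integral_congr_ae (Filter.Eventually.of_forall hpt),
          int_add3 (integrable_const _) (intg_qq hVm hVb)
            (intg_mul ((measurable_dd hVm).pow_const 2) measurable_const (dd2_bound hVb)
              (fun _ : ℝ => abs_le.mpr ⟨by norm_num, by norm_num⟩ :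
                ∀ _ : ℝ, |(-(1/2) : ℝ)| ≤ 1/2)),
          integral_mul_const, Q0 hVm hVb hVs, integral_const]
        have : ∫ x, (dd V x)^2 ∂m01 = cc V := rfl
        rw [this]
        simp only [measure_univ, ENNReal.toReal_one, probReal_univ, smul_eq_mul, one_mul]
        ring

omit hVm hVb hVs in
lemma int_add6 {f1 f2 f3 f4 f5 f6 : ℝ → ℝ} (h1 : Integrable f1 m01) (h2 : Integrable f2 m01)
    (h3 : Integrable f3 m01) (h4 : Integrable f4 m01) (h5 : Integrable f5 m01)
    (h6 : Integrable f6 m01) :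
    ∫ z, (f1 z + f2 z + f3 z + f4 z + f5 z + f6 z) ∂m01
      = ∫ z, f1 z ∂m01 + ∫ z, f2 z ∂m01 + ∫ z, f3 z ∂m01 + ∫ z, f4 z ∂m01
        + ∫ z, f5 z ∂m01 + ∫ z, f6 z ∂m01 := by
  have e2 := integral_add h1 h2
  have e3 := integral_add (show Integrable (fun z => f1 z + f2 z) m01 from h1.add h2) h3
  have e4 := integral_add
    (show Integrable (fun z => f1 z + f2 z + f3 z) m01 from (h1.add h2).add h3) h4
  have e5 := integral_add
    (show Integrable (fun z => f1 z + f2 z + f3 z + f4 z) m01 from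
      ((h1.add h2).add h3).add h4) h5
  have e6 := integral_add
    (show Integrable (fun z => f1 z + f2 z + f3 z + f4 z + f5 z) m01 from
      (((h1.add h2).add h3).add h4).add h5) h6
  rw [e6, e5, e4, e3, e2]

omit hVb hVs in
lemma L3f_meas (x : ℝ) : Measurable (fun y =>
    1/8 - dd V x/4 + qq V x/2 + dd V y/4 + qq V y/2 - dd V x * dd V y/2 - NN V y x) := by
  apply Measurable.sub
  · apply Measurable.sub
    · apply Measurable.add
      · exact measurable_const.add ((measurable_dd hVm).div_const 4)
      · exact (measurable_qq hVm).div_const 2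
    · exact ((measurable_dd hVm).const_mul (dd V x)).div_const 2
  · exact measurable_NNx hVm x

omit hVm hVs in
lemma L3f_bound (x : ℝ) : ∀ y,
    |1/8 - dd V x/4 + qq V x/2 + dd V y/4 + qq V y/2 - dd V x * dd V y/2 - NN V y x| ≤ 1 := by
  intro y
  have h1 := abs_le.mp (dd_bound hVb x)
  have h2 := abs_le.mp (dd_bound hVb y)
  have h3 := abs_le.mp (qq_bound hVb x)
  have h4 := abs_le.mp (qq_bound hVb y)
  have h5 := abs_le.mp (NN_bound hVb y x)
  have h6 := abs_le.mp (mul_abs_le (dd_bound hVb x) (dd_bound hVb y))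
  rw [abs_le]
  constructor
  · linarith [h1.2, h2.1, h3.1, h4.1, h5.2, h6.2]
  · linarith [h1.1, h2.2, h3.2, h4.2, h5.1, h6.1]

lemma L3eq (y x : ℝ) : ∫ z, (1/2 + V y z) * (1/4 + dd V z/2 - dd V x/2 - GG V z x) ∂m01
    = 1/8 - dd V x/4 + qq V x/2 + dd V y/4 + qq V y/2 - dd V x * dd V y/2 - NN V y x := by
  have hpt : ∀ z, (1/2 + V y z) * (1/4 + dd V z/2 - dd V x/2 - GG V z x)
      = (1/2) * (1/4 + dd V z/2 - dd V x/2 - GG V z x)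
        + V y z * (1/4 + dd V z/2 - dd V x/2 - GG V z x) := fun z => by ring
  rw [integral_congr_ae (Filter.Eventually.of_forall hpt),
    integral_add
      ((intg (K2f_meas hVm x).aestronglyMeasurable (K2f_bound hVb x)).const_mul _)
      (intg_mul (measurable_Vx hVm y) (K2f_meas hVm x) (hVb y) (K2f_bound hVb x)),
    integral_const_mul, intK2 hVm hVb hVs, intVK2 hVm hVb hVs]
  ring

lemma intL3 (x : ℝ) : ∫ y,
    (1/8 - dd V x/4 + qq V x/2 + dd V y/4 + qq V y/2 - dd V x * dd V y/2 - NN V y x) ∂m01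
    = 1/8 - dd V x/4 + qq V x/2 - cc V/2 - J1 V x := by
  have hpt : ∀ y, 1/8 - dd V x/4 + qq V x/2 + dd V y/4 + qq V y/2
        - dd V x * dd V y/2 - NN V y x
      = ((1/8 : ℝ) - dd V x/4 + qq V x/2) + dd V y * (1/4 - dd V x/2)
        + qq V y * (1/2) + (-(NN V y x)) := fun y => by ring
  rw [integral_congr_ae (Filter.Eventually.of_forall hpt),
    int_add4 (integrable_const _)
      (intg_mul (measurable_dd hVm) measurable_const (dd_bound hVb)
        (fun _ => le_refl _ : ∀ _ : ℝ, |(1/4 : ℝ) - dd V x/2| ≤ |(1/4 : ℝ) - dd V x/2|))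
      (intg_mul (measurable_qq hVm) measurable_const (qq_bound hVb) const_half_bound)
      (show Integrable (fun y => -(NN V y x)) m01 from
        (intg (measurable_NNx hVm x).aestronglyMeasurable (fun y => NN_bound hVb y x)).neg)]
  rw [integral_mul_const, integral_mul_const, m0 hVm hVb hVs, Q0 hVm hVb hVs, integral_neg,
    integral_const]
  have hJ : ∫ y, NN V y x ∂m01 = J1 V x := rfl
  rw [hJ]
  simp only [measure_univ, ENNReal.toReal_one, probReal_univ, smul_eq_mul, one_mul]
  ring

lemma intVL3 (x : ℝ) : ∫ y, V x y *
    (1/8 - dd V x/4 + qq V x/2 + dd V y/4 + qq V y/2 - dd V x * dd V y/2 - NN V y x) ∂m01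
    = dd V x * (1/8 - dd V x/4 + qq V x/2) + qq V x * (1/4 - dd V x/2)
      + sq V x * (1/2) - PP V x := by
  have hpt : ∀ y, V x y * (1/8 - dd V x/4 + qq V x/2 + dd V y/4 + qq V y/2
        - dd V x * dd V y/2 - NN V y x)
      = V x y * ((1/8 : ℝ) - dd V x/4 + qq V x/2)
        + (V x y * dd V y) * (1/4 - dd V x/2)
        + (V x y * qq V y) * (1/2) + (-(V x y * NN V y x)) := fun y => by ring
  rw [integral_congr_ae (Filter.Eventually.of_forall hpt),
    int_add4
      (intg_mul (measurable_Vx hVm x) measurable_const (hVb x)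
        (fun _ => le_refl _ :
          ∀ _ : ℝ, |(1/8 : ℝ) - dd V x/4 + qq V x/2| ≤ |(1/8 : ℝ) - dd V x/4 + qq V x/2|))
      (intg_mul (f := fun y => V x y * dd V y) ((measurable_Vx hVm x).mul (measurable_dd hVm)) measurable_const
        (fun y => mul_abs_le (hVb x y) (dd_bound hVb y))
        (fun _ => le_refl _ : ∀ _ : ℝ, |(1/4 : ℝ) - dd V x/2| ≤ |(1/4 : ℝ) - dd V x/2|))
      (intg_mul (f := fun y => V x y * qq V y) ((measurable_Vx hVm x).mul (measurable_qq hVm)) measurable_const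
        (fun y => mul_abs_le (hVb x y) (qq_bound hVb y)) const_half_bound)
      (show Integrable (fun y => -(V x y * NN V y x)) m01 from
        (intg_mul (measurable_Vx hVm x) (measurable_NNx hVm x) (hVb x)
          (fun y => NN_bound hVb y x)).neg)]
  rw [integral_mul_const, integral_mul_const, integral_mul_const, integral_neg]
  have e1 : ∫ y, V x y ∂m01 = dd V x := rfl
  have e2 : ∫ y, V x y * dd V y ∂m01 = qq V x := rfl
  have e3 : ∫ y, V x y * qq V y ∂m01 = sq V x := rfl
  have e4 : ∫ y, V x y * NN V y x ∂m01 = PP V x := rfl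
  rw [e1, e2, e3, e4]
  ring

lemma E4lem :
    ∫ x, ∫ y, ∫ z, ∫ u,
      (1/2 + V x y) * (1/2 + V y z) * (1/2 + V z u) * (1/2 + V u x) ∂m01 ∂m01 ∂m01 ∂m01
      = 1/16 - cc V + S2 V := by
  have inner1 : ∀ x y z, ∫ u,
      (1/2 + V x y) * (1/2 + V y z) * (1/2 + V z u) * (1/2 + V u x) ∂m01
      = ((1/2 + V x y) * (1/2 + V y z)) * (1/4 + dd V z/2 - dd V x/2 - GG V z x) := by
    intro x y z
    have hpt : ∀ u, (1/2 + V x y) * (1/2 + V y z) * (1/2 + V z u) * (1/2 + V u x)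
        = ((1/2 + V x y) * (1/2 + V y z)) * ((1/2 + V z u) * (1/2 + V u x)) :=
      fun u => by ring
    rw [integral_congr_ae (Filter.Eventually.of_forall hpt), integral_const_mul,
      K2eq hVm hVb hVs]
  have inner2 : ∀ x y, ∫ z,
      ((1/2 + V x y) * (1/2 + V y z)) * (1/4 + dd V z/2 - dd V x/2 - GG V z x) ∂m01
      = (1/2 + V x y) * (1/8 - dd V x/4 + qq V x/2 + dd V y/4 + qq V y/2
          - dd V x * dd V y/2 - NN V y x) := by
    intro x y
    have hpt : ∀ z, ((1/2 + V x y) * (1/2 + V y z)) * (1/4 + dd V z/2 - dd V x/2 - GG V z x)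
        = (1/2 + V x y) * ((1/2 + V y z) * (1/4 + dd V z/2 - dd V x/2 - GG V z x)) :=
      fun z => by ring
    rw [integral_congr_ae (Filter.Eventually.of_forall hpt), integral_const_mul,
      L3eq hVm hVb hVs]
  have inner3 : ∀ x, ∫ y, (1/2 + V x y) * (1/8 - dd V x/4 + qq V x/2 + dd V y/4 + qq V y/2
        - dd V x * dd V y/2 - NN V y x) ∂m01
      = 1/16 + qq V x/2 - cc V/4 - J1 V x/2 - (dd V x)^2/4 + sq V x/2 - PP V x := by
    intro x
    have hpt : ∀ y, (1/2 + V x y) * (1/8 - dd V x/4 + qq V x/2 + dd V y/4 + qq V y/2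
          - dd V x * dd V y/2 - NN V y x)
        = (1/2) * (1/8 - dd V x/4 + qq V x/2 + dd V y/4 + qq V y/2
            - dd V x * dd V y/2 - NN V y x)
          + V x y * (1/8 - dd V x/4 + qq V x/2 + dd V y/4 + qq V y/2
            - dd V x * dd V y/2 - NN V y x) := fun y => by ring
    rw [integral_congr_ae (Filter.Eventually.of_forall hpt),
      integral_add
        ((intg (L3f_meas hVm x).aestronglyMeasurable (L3f_bound hVb x)).const_mul _)
        (intg_mul (measurable_Vx hVm x) (L3f_meas hVm x) (hVb x) (L3f_bound hVb x)),
      integral_const_mul, intL3 hVm hVb hVs, intVL3 hVm hVb hVs]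
    ring
  calc ∫ x, ∫ y, ∫ z, ∫ u,
      (1/2 + V x y) * (1/2 + V y z) * (1/2 + V z u) * (1/2 + V u x) ∂m01 ∂m01 ∂m01 ∂m01
      = ∫ x, (1/16 + qq V x/2 - cc V/4 - J1 V x/2 - (dd V x)^2/4 + sq V x/2 - PP V x) ∂m01 := by
        apply integral_congr_ae
        apply Filter.Eventually.of_forall
        intro x
        show (∫ y, ∫ z, ∫ u, (1/2 + V x y) * (1/2 + V y z) * (1/2 + V z u) * (1/2 + V u x)
            ∂m01 ∂m01 ∂m01)
          = 1/16 + qq V x/2 - cc V/4 - J1 V x/2 - (dd V x)^2/4 + sq V x/2 - PP V x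
        rw [← inner3 x]
        apply integral_congr_ae
        apply Filter.Eventually.of_forall
        intro y
        show (∫ z, ∫ u, (1/2 + V x y) * (1/2 + V y z) * (1/2 + V z u) * (1/2 + V u x)
            ∂m01 ∂m01)
          = (1/2 + V x y) * (1/8 - dd V x/4 + qq V x/2 + dd V y/4 + qq V y/2
              - dd V x * dd V y/2 - NN V y x)
        rw [← inner2 x y]
        apply integral_congr_ae
        apply Filter.Eventually.of_forall
        intro z
        exact inner1 x y z
    _ = 1/16 - cc V + S2 V := by
        have hpt : ∀ x, 1/16 + qq V x/2 - cc V/4 - J1 V x/2 - (dd V x)^2/4 + sq V x/2 - PP V x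
            = ((1/16 : ℝ) - cc V/4) + qq V x * (1/2) + J1 V x * (-(1/2))
              + (dd V x)^2 * (-(1/4)) + sq V x * (1/2) + (-(PP V x)) := fun x => by ring
        rw [integral_congr_ae (Filter.Eventually.of_forall hpt),
          int_add6 (integrable_const _)
            (intg_mul (measurable_qq hVm) measurable_const (qq_bound hVb) const_half_bound)
            (intg_mul (measurable_J1 hVm) measurable_const (J1_bound hVb)
              (fun _ : ℝ => abs_le.mpr ⟨by norm_num, by norm_num⟩ :
                ∀ _ : ℝ, |(-(1/2) : ℝ)| ≤ 1/2))
            (intg_mul ((measurable_dd hVm).pow_const 2) measurable_const (dd2_bound hVb)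
              (fun _ : ℝ => abs_le.mpr ⟨by norm_num, by norm_num⟩ :
                ∀ _ : ℝ, |(-(1/4) : ℝ)| ≤ 1/2))
            (intg_mul (measurable_sq hVm) measurable_const (sq_bound hVb) const_half_bound)
            (show Integrable (fun x => -(PP V x)) m01 from
              (intg (measurable_PP hVm).aestronglyMeasurable (PP_bound hVb)).neg)]
        rw [integral_mul_const, integral_mul_const, integral_mul_const, integral_mul_const,
          integral_neg, Q0 hVm hVb hVs, J0 hVm hVb hVs, sq0 hVm hVb hVs, P0 hVm hVb hVs,
          integral_const]
        have : ∫ x, (dd V x)^2 ∂m01 = cc V := rfl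
        rw [this]
        simp only [measure_univ, ENNReal.toReal_one, probReal_univ, smul_eq_mul, one_mul]
        ring

-- ⟨Gv,v⟩ identity
lemma int_Vd (w : ℝ) : ∫ x, V x w * dd V x ∂m01 = - qq V w := by
  have h : ∀ x, V x w * dd V x = -(V w x * dd V x) := fun x => by rw [hVs x w]; ring
  rw [integral_congr_ae (Filter.Eventually.of_forall h), integral_neg, qq]

lemma GvvId (v : ℝ → ℝ) (hvm : Measurable v) {C : ℝ} (hvb : ∀ x, |v x| ≤ C) :
    ∫ x, ∫ u, GG V x u * v x * v u ∂m01 ∂m01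
      = ∫ w, (∫ x, V x w * v x ∂m01)^2 ∂m01 := by
  have hC0 : 0 ≤ C := (abs_nonneg _).trans (hvb 0)
  set ww : ℝ → ℝ := fun w => ∫ x, V x w * v x ∂m01 with hww
  have hwwm : Measurable ww := by
    have : Measurable (fun p : ℝ × ℝ => V p.2 p.1 * v p.2) :=
      (hVm.comp (measurable_snd.prodMk measurable_fst)).mul (hvm.comp measurable_snd)
    exact (this.stronglyMeasurable.integral_prod_right').measurable
  have hwwb : ∀ w, |ww w| ≤ (1/2) * C :=
    fun w => abs_int_le hVb (fun x => mul_abs_le (hVb x w) (hvb x))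
  have hT : ∀ x, ∫ u, GG V x u * v x * v u ∂m01
      = v x * ∫ w, V x w * ww w ∂m01 := by
    intro x
    have hpt : ∀ u, GG V x u * v x * v u = v x * (GG V x u * v u) := fun u => by ring
    rw [integral_congr_ae (Filter.Eventually.of_forall hpt), integral_const_mul]
    congr 1
    -- ∫ u, GG V x u * v u = ∫ w, V x w * ww w
    have h1 : ∀ u, GG V x u * v u = ∫ w, V x w * V u w * v u ∂m01 := by
      intro u
      rw [GG, integral_mul_const]
    rw [integral_congr_ae (Filter.Eventually.of_forall h1)]
    have hm2 : Measurable (uncurry fun u w => V x w * V u w * v u) := by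
      apply Measurable.mul
      · apply Measurable.mul
        · exact (measurable_Vx hVm x).comp measurable_snd
        · exact hVm.comp (measurable_fst.prodMk measurable_snd)
      · exact hvm.comp measurable_fst
    have hb2 : ∀ u w, |V x w * V u w * v u| ≤ (1/2) * (1/2) * C := fun u w =>
      mul_abs_le (mul_abs_le (hVb x w) (hVb u w)) (hvb u)
    rw [swap_int hm2 hb2]
    apply integral_congr_ae
    apply Filter.Eventually.of_forall
    intro w
    show (∫ u, V x w * V u w * v u ∂m01) = V x w * ww w
    have hpt2 : ∀ u, V x w * V u w * v u = V x w * (V u w * v u) := fun u => by ring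
    rw [integral_congr_ae (Filter.Eventually.of_forall hpt2), integral_const_mul]
  rw [integral_congr_ae (Filter.Eventually.of_forall hT)]
  have hpt3 : ∀ x, v x * ∫ w, V x w * ww w ∂m01 = ∫ w, v x * (V x w * ww w) ∂m01 :=
    fun x => (integral_const_mul _ _).symm
  rw [integral_congr_ae (Filter.Eventually.of_forall hpt3)]
  have hm3 : Measurable (uncurry fun x w => v x * (V x w * ww w)) := by
    apply Measurable.mul
    · exact hvm.comp measurable_fst
    · exact hVm.mul (hwwm.comp measurable_snd)
  have hb3 : ∀ x w, |v x * (V x w * ww w)| ≤ C * ((1/2) * ((1/2) * C)) := fun x w =>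
    mul_abs_le (hvb x) (mul_abs_le (hVb x w) (hwwb w))
  rw [swap_int hm3 hb3]
  apply integral_congr_ae
  apply Filter.Eventually.of_forall
  intro w
  show (∫ x, v x * (V x w * ww w) ∂m01) = (∫ x, V x w * v x ∂m01)^2
  have hpt4 : ∀ x, v x * (V x w * ww w) = (V x w * v x) * ww w := fun x => by ring
  rw [integral_congr_ae (Filter.Eventually.of_forall hpt4), integral_mul_const]
  rw [hww]
  ring

lemma G_dd_dd : ∫ x, ∫ u, GG V x u * dd V x * dd V u ∂m01 ∂m01 = ∫ w, (qq V w)^2 ∂m01 := by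
  rw [GvvId hVm hVb hVs (dd V) (measurable_dd hVm) (dd_bound hVb)]
  apply integral_congr_ae
  apply Filter.Eventually.of_forall
  intro w
  show (∫ x, V x w * dd V x ∂m01)^2 = (qq V w)^2
  rw [int_Vd hVm hVb hVs w]
  ring

lemma int_G_x (x : ℝ) : ∫ u, GG V x u ∂m01 = - qq V x := by
  have h : ∀ u, GG V x u = GG V u x := fun u => GG_symm hVm hVb hVs x u
  rw [integral_congr_ae (Filter.Eventually.of_forall h), int_GG hVm hVb hVs]

lemma t11G : ∫ x, ∫ u, GG V x u ∂m01 ∂m01 = cc V := by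
  have h : ∀ x, ∫ u, GG V x u ∂m01 = - qq V x := int_G_x hVm hVb hVs
  rw [integral_congr_ae (Filter.Eventually.of_forall h), integral_neg, Q0 hVm hVb hVs,
    neg_neg]

omit hVm hVb hVs in
lemma sq_bound_of {f : ℝ → ℝ} {C : ℝ} (h : ∀ x, |f x| ≤ C) : ∀ x, |f x ^ 2| ≤ C^2 :=
  fun x => by
    rw [abs_of_nonneg (sq_nonneg _), ← sq_abs]
    exact pow_le_pow_left₀ (abs_nonneg _) (h x) 2

omit hVs in
lemma cc_nonneg : 0 ≤ cc V := integral_nonneg (fun x => sq_nonneg _)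

omit hVm hVs in
lemma cc_le : cc V ≤ 1/4 := by
  have := abs_int_le hVb (f := fun x => (dd V x)^2) (C := 1/4) (dd2_bound hVb)
  exact (le_abs_self _).trans this

omit hVb hVs in
lemma measurable_IG2 : Measurable (fun x => ∫ u, (GG V x u)^2 ∂m01) := by
  have : Measurable (fun p : ℝ × ℝ => (GG V p.1 p.2)^2) :=
    (measurable_GG hVm).pow_const 2
  exact (this.stronglyMeasurable.integral_prod_right').measurable

omit hVb hVs in
lemma measurable_Td : Measurable (fun x => ∫ u, GG V x u * dd V u ∂m01) := by
  have : Measurable (fun p : ℝ × ℝ => GG V p.1 p.2 * dd V p.2) :=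
    (measurable_GG hVm).mul ((measurable_dd hVm).comp measurable_snd)
  exact (this.stronglyMeasurable.integral_prod_right').measurable

lemma t2_ge : (cc V)^2 ≤ ∫ w, (qq V w)^2 ∂m01 := by
  have h0 : 0 ≤ ∫ w, ((qq V w)^2 + qq V w * (2 * cc V) + (cc V)^2) ∂m01 :=
    integral_nonneg (fun w => by
      simp only [Pi.zero_apply]; nlinarith [sq_nonneg (qq V w + cc V)])
  rw [int_add3
      (intg ((measurable_qq hVm).pow_const 2).aestronglyMeasurable
        (sq_bound_of (qq_bound hVb)))
      (intg_mul (measurable_qq hVm) measurable_const (qq_bound hVb)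
        (fun _ => le_refl _ : ∀ _ : ℝ, |2 * cc V| ≤ |2 * cc V|))
      (integrable_const _)] at h0
  rw [integral_mul_const, Q0 hVm hVb hVs, integral_const] at h0
  simp only [measure_univ, ENNReal.toReal_one, probReal_univ, smul_eq_mul, one_mul] at h0
  nlinarith [h0]

lemma equality_case (hS : S2 V = 2 * (cc V)^2) :
    (∀ᵐ w ∂m01, qq V w = - cc V) ∧
    (∀ᵐ p ∂(m01.prod m01), GG V p.1 p.2 = cc V + dd V p.1 * dd V p.2) := by
  set c := cc V with hc
  -- the residual double integral
  have hTdb : ∀ x, |∫ u, GG V x u * dd V u ∂m01| ≤ 1/8 := fun x =>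
    (abs_int_le hVb (C := 1/4 * (1/2 : ℝ))
      (fun u => mul_abs_le (GG_bound hVb x u) (dd_bound hVb u))).trans (by norm_num)
  have hRin : ∀ x, ∫ u, (GG V x u - c - dd V x * dd V u)^2 ∂m01
      = (∫ u, (GG V x u)^2 ∂m01) + 2*c*(qq V x)
        - 2 * dd V x * (∫ u, GG V x u * dd V u ∂m01) + c^2 + c * (dd V x)^2 := by
    intro x
    have hpt : ∀ u, (GG V x u - c - dd V x * dd V u)^2
        = (GG V x u)^2 + GG V x u * (-(2*c)) + (GG V x u * dd V u) * (-(2 * dd V x))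
          + dd V u * (2*c*dd V x) + (c^2 + 0) + (dd V u)^2 * ((dd V x)^2) := fun u => by ring
    rw [integral_congr_ae (Filter.Eventually.of_forall hpt),
      int_add6
        (intg ((measurable_GGx' hVm x).pow_const 2).aestronglyMeasurable
          (sq_bound_of (fun u => GG_bound hVb x u)))
        (intg_mul (measurable_GGx' hVm x) measurable_const (fun u => GG_bound hVb x u)
          (fun _ => le_refl _ : ∀ _ : ℝ, |(-(2*c) : ℝ)| ≤ |(-(2*c) : ℝ)|))
        (intg_mul (f := fun u => GG V x u * dd V u) ((measurable_GGx' hVm x).mul (measurable_dd hVm)) measurable_const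
          (fun u => mul_abs_le (GG_bound hVb x u) (dd_bound hVb u))
          (fun _ => le_refl _ : ∀ _ : ℝ, |(-(2 * dd V x) : ℝ)| ≤ |(-(2 * dd V x) : ℝ)|))
        (intg_mul (measurable_dd hVm) measurable_const (dd_bound hVb)
          (fun _ => le_refl _ : ∀ _ : ℝ, |(2*c*dd V x : ℝ)| ≤ |(2*c*dd V x : ℝ)|))
        (integrable_const _)
        (intg_mul ((measurable_dd hVm).pow_const 2) measurable_const (dd2_bound hVb)
          (fun _ => le_refl _ : ∀ _ : ℝ, |((dd V x)^2 : ℝ)| ≤ |((dd V x)^2 : ℝ)|))]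
    rw [integral_mul_const, integral_mul_const, integral_mul_const, integral_mul_const,
      int_G_x hVm hVb hVs x, m0 hVm hVb hVs, integral_const]
    have e1 : ∫ u, (dd V u)^2 ∂m01 = c := rfl
    rw [e1]
    simp only [measure_univ, ENNReal.toReal_one, probReal_univ, smul_eq_mul, one_mul]
    ring
  -- bound for the residual integrand
  have hcb : 0 ≤ c ∧ c ≤ 1/4 := ⟨cc_nonneg hVm hVb, cc_le hVb⟩
  have hResb : ∀ x u, |(GG V x u - c - dd V x * dd V u)^2| ≤ 1 := by
    intro x u
    have h1 := abs_le.mp (GG_bound hVb x u)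
    have h2 := abs_le.mp (mul_abs_le (dd_bound hVb x) (dd_bound hVb u))
    have habs : |GG V x u - c - dd V x * dd V u| ≤ 1 := by
      rw [abs_le]
      constructor <;> [linarith [h1.1, h2.2, hcb.2]; linarith [h1.2, h2.1, hcb.1]]
    have h3 := sq_bound_of (f := fun _ : ℝ => GG V x u - c - dd V x * dd V u) (C := 1)
      (fun _ => habs) 0
    simpa using h3
  have hResm : Measurable (fun p : ℝ × ℝ => (GG V p.1 p.2 - c - dd V p.1 * dd V p.2)^2) :=
    (((measurable_GG hVm).sub measurable_const).sub
      (((measurable_dd hVm).comp measurable_fst).mul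
        ((measurable_dd hVm).comp measurable_snd))).pow_const 2
  have hIG2b : ∀ x, |∫ u, (GG V x u)^2 ∂m01| ≤ 1/16 := fun x =>
    (abs_int_le hVb (C := (1/4 : ℝ)^2) (sq_bound_of (fun u => GG_bound hVb x u))).trans
      (by norm_num)
  have hR : ∫ x, ∫ u, (GG V x u - c - dd V x * dd V u)^2 ∂m01 ∂m01
      = S2 V - 2 * ∫ w, (qq V w)^2 ∂m01 := by
    rw [integral_congr_ae (Filter.Eventually.of_forall hRin)]
    have hpt : ∀ x, (∫ u, (GG V x u)^2 ∂m01) + 2*c*(qq V x)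
          - 2 * dd V x * (∫ u, GG V x u * dd V u ∂m01) + c^2 + c * (dd V x)^2
        = (∫ u, (GG V x u)^2 ∂m01) + qq V x * (2*c)
          + (-(2 * (dd V x * (∫ u, GG V x u * dd V u ∂m01)))) + (c^2 : ℝ)
          + (dd V x)^2 * c := fun x => by ring
    rw [integral_congr_ae (Filter.Eventually.of_forall hpt)]
    have e5 := int_add6 (f6 := fun _ => (0:ℝ))
      (intg (measurable_IG2 hVm).aestronglyMeasurable hIG2b)
      (intg_mul (measurable_qq hVm) measurable_const (qq_bound hVb)
        (fun _ => le_refl _ : ∀ _ : ℝ, |(2*c : ℝ)| ≤ |(2*c : ℝ)|))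
      (show Integrable (fun x => -(2 * (dd V x * (∫ u, GG V x u * dd V u ∂m01)))) m01 from
        ((intg_mul (measurable_dd hVm) (measurable_Td hVm)
          (dd_bound hVb) hTdb).const_mul 2).neg)
      (integrable_const (c^2 : ℝ))
      (intg_mul ((measurable_dd hVm).pow_const 2) measurable_const (dd2_bound hVb)
        (fun _ => le_refl _ : ∀ _ : ℝ, |(c : ℝ)| ≤ |(c : ℝ)|))
      (integrable_const 0)
    have hpt2 : ∀ x, (∫ u, (GG V x u)^2 ∂m01) + qq V x * (2*c)
          + (-(2 * (dd V x * (∫ u, GG V x u * dd V u ∂m01)))) + (c^2 : ℝ)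
          + (dd V x)^2 * c
        = (∫ u, (GG V x u)^2 ∂m01) + qq V x * (2*c)
          + (-(2 * (dd V x * (∫ u, GG V x u * dd V u ∂m01)))) + (c^2 : ℝ)
          + (dd V x)^2 * c + 0 := fun x => by ring
    rw [integral_congr_ae (Filter.Eventually.of_forall hpt2), e5]
    rw [integral_mul_const, integral_mul_const, Q0 hVm hVb hVs]
    have eS : ∫ x, (∫ u, (GG V x u)^2 ∂m01) ∂m01 = S2 V := rfl
    have eNeg : ∫ x, -(2 * (dd V x * (∫ u, GG V x u * dd V u ∂m01))) ∂m01
        = - (2 * ∫ w, (qq V w)^2 ∂m01) := by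
      rw [integral_neg, integral_const_mul]
      have key : ∫ x, dd V x * (∫ u, GG V x u * dd V u ∂m01) ∂m01
          = ∫ w, (qq V w)^2 ∂m01 := by
        rw [← G_dd_dd hVm hVb hVs]
        apply integral_congr_ae
        apply Filter.Eventually.of_forall
        intro x
        show dd V x * (∫ u, GG V x u * dd V u ∂m01)
          = ∫ u, GG V x u * dd V x * dd V u ∂m01
        rw [← integral_const_mul]
        apply integral_congr_ae
        apply Filter.Eventually.of_forall
        intro u
        ring
      rw [key]
    rw [eS, eNeg]
    have ecc : ∫ x, (dd V x)^2 ∂m01 = c := rfl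
    rw [ecc]
    simp only [integral_const, measure_univ, ENNReal.toReal_one, probReal_univ, smul_eq_mul, one_mul]
    ring
  have hRnn : 0 ≤ ∫ x, ∫ u, (GG V x u - c - dd V x * dd V u)^2 ∂m01 ∂m01 :=
    integral_nonneg (fun x => integral_nonneg (fun u => sq_nonneg _))
  have ht2ge := t2_ge hVm hVb hVs
  have ht2 : ∫ w, (qq V w)^2 ∂m01 = c^2 := by
    rw [hR, hS] at hRnn
    have := ht2ge
    nlinarith [hRnn]
  have hR0 : ∫ x, ∫ u, (GG V x u - c - dd V x * dd V u)^2 ∂m01 ∂m01 = 0 := by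
    rw [hR, hS, ht2]; ring
  constructor
  · -- qq = -c a.e.
    have hvar : ∫ w, (qq V w + c)^2 ∂m01 = 0 := by
      have hpt : ∀ w, (qq V w + c)^2 = (qq V w)^2 + qq V w * (2*c) + c^2 := fun w => by ring
      rw [integral_congr_ae (Filter.Eventually.of_forall hpt),
        int_add3
          (intg ((measurable_qq hVm).pow_const 2).aestronglyMeasurable
            (sq_bound_of (qq_bound hVb)))
          (intg_mul (measurable_qq hVm) measurable_const (qq_bound hVb)
            (fun _ => le_refl _ : ∀ _ : ℝ, |(2*c : ℝ)| ≤ |(2*c : ℝ)|))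
          (integrable_const _), integral_mul_const, Q0 hVm hVb hVs, ht2, integral_const]
      simp only [measure_univ, ENNReal.toReal_one, probReal_univ, smul_eq_mul, one_mul]
      ring
    have hqqcb : ∀ w, |qq V w + c| ≤ 1/2 := fun w => by
      have := abs_le.mp (qq_bound hVb w)
      rw [abs_le]
      constructor <;> [linarith [hcb.1, hcb.2]; linarith [hcb.1, hcb.2]]
    have hint : Integrable (fun w => (qq V w + c)^2) m01 :=
      intg (((measurable_qq hVm).add_const c).pow_const 2).aestronglyMeasurable
        (sq_bound_of hqqcb)
    have := (integral_eq_zero_iff_of_nonneg (fun w => sq_nonneg (qq V w + c)) hint).mp hvar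
    filter_upwards [this] with w hw
    have : (qq V w + c)^2 = 0 := hw
    have := pow_eq_zero_iff (n := 2) (by norm_num) |>.mp this
    linarith [this]
  · -- G = c + d⊗d a.e. on the product
    have hprod : ∫ p : ℝ × ℝ, (GG V p.1 p.2 - c - dd V p.1 * dd V p.2)^2 ∂(m01.prod m01)
        = 0 := by
      rw [← hR0]
      exact (integral_integral (f := fun x u => (GG V x u - c - dd V x * dd V u)^2)
        (intg2 (f := fun p => (GG V p.1 p.2 - c - dd V p.1 * dd V p.2)^2)
          hResm.aestronglyMeasurable (fun p => hResb p.1 p.2))).symm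
    have hint2 : Integrable (fun p : ℝ × ℝ => (GG V p.1 p.2 - c - dd V p.1 * dd V p.2)^2)
        (m01.prod m01) := intg2 hResm.aestronglyMeasurable (fun p => hResb p.1 p.2)
    have := (integral_eq_zero_iff_of_nonneg (fun p => sq_nonneg _) hint2).mp hprod
    filter_upwards [this] with p hp
    have hp' : (GG V p.1 p.2 - c - dd V p.1 * dd V p.2)^2 = 0 := hp
    have := pow_eq_zero_iff (n := 2) (by norm_num) |>.mp hp'
    linarith [this]

lemma testA (hG : ∀ᵐ p : ℝ × ℝ ∂(m01.prod m01), GG V p.1 p.2 = cc V + dd V p.1 * dd V p.2)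
    (v : ℝ → ℝ) (hvm : Measurable v) {C : ℝ} (hvb : ∀ x, |v x| ≤ C)
    (h1 : cc V * ∫ x, v x ∂m01 = 0) (h2 : ∫ x, v x * dd V x ∂m01 = 0) :
    ∀ᵐ y ∂m01, ∫ x, V x y * v x ∂m01 = 0 := by
  have hC0 : 0 ≤ C := (abs_nonneg _).trans (hvb 0)
  have hccb : |cc V| ≤ 1/4 := by
    rw [abs_of_nonneg (cc_nonneg hVm hVb)]
    exact cc_le hVb
  -- the Gvv integral
  have hGm : Measurable (fun p : ℝ × ℝ => GG V p.1 p.2 * v p.1 * v p.2) :=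
    ((measurable_GG hVm).mul (hvm.comp measurable_fst)).mul (hvm.comp measurable_snd)
  have hGb : ∀ p : ℝ × ℝ, |GG V p.1 p.2 * v p.1 * v p.2| ≤ 1/4 * C * C := fun p =>
    mul_abs_le (mul_abs_le (GG_bound hVb p.1 p.2) (hvb p.1)) (hvb p.2)
  have hFm : Measurable (fun p : ℝ × ℝ => (cc V + dd V p.1 * dd V p.2) * v p.1 * v p.2) :=
    ((measurable_const.add (((measurable_dd hVm).comp measurable_fst).mul
      ((measurable_dd hVm).comp measurable_snd))).mul (hvm.comp measurable_fst)).mul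
      (hvm.comp measurable_snd)
  have hFb : ∀ p : ℝ × ℝ, |(cc V + dd V p.1 * dd V p.2) * v p.1 * v p.2| ≤ 1/2 * C * C := by
    intro p
    refine mul_abs_le (mul_abs_le ?_ (hvb p.1)) (hvb p.2)
    have h1' := abs_le.mp hccb
    have h2' := abs_le.mp (mul_abs_le (dd_bound hVb p.1) (dd_bound hVb p.2))
    rw [abs_le]
    constructor <;> [linarith [h1'.1, h2'.1]; linarith [h1'.2, h2'.2]]
  have e1 : ∫ x, ∫ u, GG V x u * v x * v u ∂m01 ∂m01
      = ∫ p : ℝ × ℝ, GG V p.1 p.2 * v p.1 * v p.2 ∂(m01.prod m01) :=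
    integral_integral (f := fun x u => GG V x u * v x * v u)
      (intg2 (f := fun p => GG V p.1 p.2 * v p.1 * v p.2) hGm.aestronglyMeasurable hGb)
  have e2 : ∫ p : ℝ × ℝ, GG V p.1 p.2 * v p.1 * v p.2 ∂(m01.prod m01)
      = ∫ p : ℝ × ℝ, (cc V + dd V p.1 * dd V p.2) * v p.1 * v p.2 ∂(m01.prod m01) := by
    apply integral_congr_ae
    filter_upwards [hG] with p hp
    rw [hp]
  have e3 : ∫ p : ℝ × ℝ, (cc V + dd V p.1 * dd V p.2) * v p.1 * v p.2 ∂(m01.prod m01)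
      = ∫ x, ∫ u, (cc V + dd V x * dd V u) * v x * v u ∂m01 ∂m01 :=
    (integral_integral (f := fun x u => (cc V + dd V x * dd V u) * v x * v u)
      (intg2 (f := fun p => (cc V + dd V p.1 * dd V p.2) * v p.1 * v p.2)
        hFm.aestronglyMeasurable hFb)).symm
  have e4 : ∫ x, ∫ u, (cc V + dd V x * dd V u) * v x * v u ∂m01 ∂m01 = 0 := by
    have hin : ∀ x, ∫ u, (cc V + dd V x * dd V u) * v x * v u ∂m01
        = (cc V * ∫ u, v u ∂m01) * v x + (∫ u, v u * dd V u ∂m01) * (dd V x * v x) := by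
      intro x
      have hpt : ∀ u, (cc V + dd V x * dd V u) * v x * v u
          = (cc V * v x) * v u + (dd V x * v x) * (dd V u * v u) := fun u => by ring
      rw [integral_congr_ae (Filter.Eventually.of_forall hpt),
        integral_add
          ((intg hvm.aestronglyMeasurable hvb).const_mul _)
          ((intg_mul (measurable_dd hVm) hvm (dd_bound hVb) hvb).const_mul _),
        integral_const_mul, integral_const_mul]
      have : ∫ u, dd V u * v u ∂m01 = ∫ u, v u * dd V u ∂m01 :=
        integral_congr_ae (Filter.Eventually.of_forall (fun u => mul_comm _ _))
      rw [this]
      ring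
    rw [integral_congr_ae (Filter.Eventually.of_forall hin),
      integral_add
        ((intg hvm.aestronglyMeasurable hvb).const_mul _)
        ((intg_mul (measurable_dd hVm) hvm (dd_bound hVb) hvb).const_mul _),
      integral_const_mul, integral_const_mul]
    have hc : ∫ x, dd V x * v x ∂m01 = ∫ x, v x * dd V x ∂m01 :=
      integral_congr_ae (Filter.Eventually.of_forall (fun u => mul_comm _ _))
    rw [hc, h1, h2]
    ring
  have hww : ∫ w, (∫ x, V x w * v x ∂m01)^2 ∂m01 = 0 := by
    rw [← GvvId hVm hVb hVs v hvm hvb, e1, e2, e3, e4]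
  have hwwm : Measurable (fun w => ∫ x, V x w * v x ∂m01) := by
    have : Measurable (fun p : ℝ × ℝ => V p.2 p.1 * v p.2) :=
      (hVm.comp (measurable_snd.prodMk measurable_fst)).mul (hvm.comp measurable_snd)
    exact (this.stronglyMeasurable.integral_prod_right').measurable
  have hwwb : ∀ w, |∫ x, V x w * v x ∂m01| ≤ (1/2) * C :=
    fun w => abs_int_le hVb (fun x => mul_abs_le (hVb x w) (hvb x))
  have hint : Integrable (fun w => (∫ x, V x w * v x ∂m01)^2) m01 :=
    intg ((hwwm.pow_const 2).aestronglyMeasurable) (sq_bound_of hwwb)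
  have := (integral_eq_zero_iff_of_nonneg (fun w => sq_nonneg _) hint).mp hww
  filter_upwards [this] with w hw
  have hw' : (∫ x, V x w * v x ∂m01)^2 = 0 := hw
  exact pow_eq_zero_iff (n := 2) (by norm_num) |>.mp hw'

end VSec

-- π-system uniqueness lemma
lemma ae_zero_of_rat {g : ℝ → ℝ} (hgm : Measurable g) (hgi : Integrable g m01)
    (hq : ∀ q : ℚ, ∫ x in Set.Iic (q:ℝ), g x ∂m01 = 0) (htot : ∫ x, g x ∂m01 = 0) :
    ∀ᵐ x ∂m01, g x = 0 := by
  set ν1 : Measure ℝ := m01.withDensity (fun x => ENNReal.ofReal (g x)) with hν1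
  set ν2 : Measure ℝ := m01.withDensity (fun x => ENNReal.ofReal (-g x)) with hν2
  have hfin1 : IsFiniteMeasure ν1 := isFiniteMeasure_withDensity_ofReal hgi.2
  have hfin2 : IsFiniteMeasure ν2 := isFiniteMeasure_withDensity_ofReal hgi.neg.2
  have happ : ∀ s : Set ℝ, MeasurableSet s →
      (∫ x in s, g x ∂m01 = (ν1 s).toReal - (ν2 s).toReal) := by
    intro s hs
    rw [hν1, hν2, withDensity_apply _ hs, withDensity_apply _ hs]
    exact integral_eq_lintegral_pos_part_sub_lintegral_neg_part (hgi.restrict (s := s))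
  have hEq : ∀ s : Set ℝ, MeasurableSet s → (∫ x in s, g x ∂m01 = 0) → ν1 s = ν2 s := by
    intro s hs h0
    have h1 : (ν1 s).toReal - (ν2 s).toReal = 0 := by rw [← happ s hs, h0]
    have f1 : ν1 s ≠ ⊤ := measure_ne_top ν1 s
    have f2 : ν2 s ≠ ⊤ := measure_ne_top ν2 s
    have := sub_eq_zero.mp h1
    exact (ENNReal.toReal_eq_toReal_iff' f1 f2).mp this
  have hνeq : ν1 = ν2 := by
    apply ext_of_generate_finite (⋃ a : ℚ, {Set.Iic (a : ℝ)})
    · rw [BorelSpace.measurable_eq (α := ℝ)]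
      exact Real.borel_eq_generateFrom_Iic_rat
    · exact Real.isPiSystem_Iic_rat
    · intro s hsmem
      simp only [Set.mem_iUnion, Set.mem_singleton_iff] at hsmem
      obtain ⟨q, rfl⟩ := hsmem
      exact hEq _ measurableSet_Iic (hq q)
    · have := hEq Set.univ MeasurableSet.univ (by
        simpa using htot)
      exact this
  have hae : (fun x => ENNReal.ofReal (g x)) =ᵐ[m01] (fun x => ENNReal.ofReal (-g x)) := by
    rw [← withDensity_eq_iff_of_sigmaFinite
      (g := fun x => ENNReal.ofReal (-g x))
      (hgm.ennreal_ofReal.aemeasurable) (hgm.neg.ennreal_ofReal.aemeasurable)]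
    exact hνeq
  filter_upwards [hae] with x hx
  by_contra hne
  rcases lt_or_gt_of_ne hne with hlt | hgt
  · have h1 : ENNReal.ofReal (g x) = 0 := ENNReal.ofReal_eq_zero.mpr (le_of_lt hlt)
    have h2 : 0 < ENNReal.ofReal (-g x) := ENNReal.ofReal_pos.mpr (by linarith)
    rw [hx] at h1
    exact absurd h1 (ne_of_gt h2)
  · have h1 : ENNReal.ofReal (-g x) = 0 := ENNReal.ofReal_eq_zero.mpr (by linarith)
    have h2 : 0 < ENNReal.ofReal (g x) := ENNReal.ofReal_pos.mpr hgt
    rw [← hx] at h1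
    exact absurd h1 (ne_of_gt h2)

end Stmt15

namespace Stmt15

section VSec2

variable {V : ℝ → ℝ → ℝ} (hVm : Measurable (uncurry V)) (hVb : ∀ x y, |V x y| ≤ 1/2)
  (hVs : ∀ x y, V x y = - V y x)

include hVm hVb hVs

lemma forward_V (hS : S2 V = 2 * (cc V)^2) :
    ∀ᵐ p : ℝ × ℝ ∂(m01.prod m01), V p.1 p.2 = dd V p.1 - dd V p.2 := by
  obtain ⟨hqq, hG⟩ := equality_case hVm hVb hVs hS
  have key : ∀ᵐ y ∂m01, ∀ᵐ x ∂m01, V x y = dd V x - dd V y := by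
    by_cases hc : cc V = 0
    · -- degenerate case : V = 0 a.e.
      have hdd0 : ∀ᵐ x ∂m01, dd V x = 0 := by
        have hcc : ∫ x, (dd V x)^2 ∂m01 = 0 := hc
        have hint : Integrable (fun x => (dd V x)^2) m01 :=
          intg ((measurable_dd hVm).pow_const 2).aestronglyMeasurable (dd2_bound hVb)
        have h0 := (integral_eq_zero_iff_of_nonneg (fun x => sq_nonneg _) hint).mp hcc
        filter_upwards [h0] with x hx
        exact pow_eq_zero_iff (n := 2) (by norm_num) |>.mp hx
      have hww : ∀ q : ℚ, ∀ᵐ y ∂m01,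
          ∫ x, V x y * (Set.Iic (q:ℝ)).indicator (fun _ => (1:ℝ)) x ∂m01 = 0 := by
        intro q
        have hvm0 : Measurable ((Set.Iic (q:ℝ)).indicator (fun _ => (1:ℝ))) :=
          measurable_const.indicator measurableSet_Iic
        have hvb0 : ∀ x, |(Set.Iic (q:ℝ)).indicator (fun _ => (1:ℝ)) x| ≤ 1 := fun x => by
          by_cases hx : x ∈ Set.Iic (q:ℝ) <;>
            simp [Set.indicator_of_mem, Set.indicator_of_notMem, hx]
        have hA1 : cc V * ∫ x, (Set.Iic (q:ℝ)).indicator (fun _ => (1:ℝ)) x ∂m01 = 0 := by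
          rw [hc]; ring
        have hA2 : ∫ x, (Set.Iic (q:ℝ)).indicator (fun _ => (1:ℝ)) x * dd V x ∂m01 = 0 := by
          have hpt : ∀ᵐ x ∂m01,
              (Set.Iic (q:ℝ)).indicator (fun _ => (1:ℝ)) x * dd V x = 0 := by
            filter_upwards [hdd0] with x hx
            rw [hx]; ring
          rw [integral_congr_ae hpt, integral_zero]
        exact testA hVm hVb hVs hG _ hvm0 hvb0 hA1 hA2
      have hww' : ∀ᵐ y ∂m01, ∀ q : ℚ,
          ∫ x, V x y * (Set.Iic (q:ℝ)).indicator (fun _ => (1:ℝ)) x ∂m01 = 0 :=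
        ae_all_iff.mpr hww
      filter_upwards [hww', hdd0] with y hy hdy
      have hsq : ∀ q : ℚ, ∫ x in Set.Iic (q:ℝ), V x y ∂m01 = 0 := by
        intro q
        have hpt : ∀ x, (Set.Iic (q:ℝ)).indicator (fun x => V x y) x
            = V x y * (Set.Iic (q:ℝ)).indicator (fun _ => (1:ℝ)) x := by
          intro x
          by_cases hx : x ∈ Set.Iic (q:ℝ) <;>
            simp [Set.indicator_of_mem, Set.indicator_of_notMem, hx]
        rw [← integral_indicator measurableSet_Iic,
          integral_congr_ae (Filter.Eventually.of_forall hpt), hy q]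
      have htot : ∫ x, V x y ∂m01 = 0 := by
        rw [int_Vy hVm hVb hVs y, hdy, neg_zero]
      have hres := ae_zero_of_rat (measurable_Vy hVm y)
        (intg (measurable_Vy hVm y).aestronglyMeasurable (fun x => hVb x y)) hsq htot
      filter_upwards [hres, hdd0] with x h1 h2
      rw [h1, h2, hdy]; ring
    · -- nondegenerate case
      set c := cc V with hcdef
      have hcb : 0 ≤ c ∧ c ≤ 1/4 := ⟨cc_nonneg hVm hVb, cc_le hVb⟩
      have hbqb : ∀ q : ℚ, |∫ x, (Set.Iic (q:ℝ)).indicator (dd V) x ∂m01| ≤ 1/2 := by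
        intro q
        apply abs_int_le hVb
        intro x
        by_cases hx : x ∈ Set.Iic (q:ℝ)
        · rw [Set.indicator_of_mem hx]; exact dd_bound hVb x
        · rw [Set.indicator_of_notMem hx]; simp
      have haqb : ∀ q : ℚ, |(m01 (Set.Iic (q:ℝ))).toReal| ≤ 1 := by
        intro q
        rw [abs_of_nonneg ENNReal.toReal_nonneg]
        have h1 : m01 (Set.Iic (q:ℝ)) ≤ m01 Set.univ := measure_mono (Set.subset_univ _)
        have h2 : m01 Set.univ = 1 := measure_univ
        calc (m01 (Set.Iic (q:ℝ))).toReal ≤ (m01 Set.univ).toReal :=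
              ENNReal.toReal_mono (by rw [h2]; exact ENNReal.one_ne_top) h1
          _ = 1 := by rw [h2]; simp
      -- test functions
      have hww : ∀ q : ℚ, ∀ᵐ y ∂m01,
          ∫ x, V x y * (c * (Set.Iic (q:ℝ)).indicator (fun _ => (1:ℝ)) x
            - c * (m01 (Set.Iic (q:ℝ))).toReal
            - (∫ t, (Set.Iic (q:ℝ)).indicator (dd V) t ∂m01) * dd V x) ∂m01 = 0 := by
        intro q
        set aq := (m01 (Set.Iic (q:ℝ))).toReal with haq
        set bq := ∫ t, (Set.Iic (q:ℝ)).indicator (dd V) t ∂m01 with hbq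
        set vq : ℝ → ℝ := fun x => c * (Set.Iic (q:ℝ)).indicator (fun _ => (1:ℝ)) x
          - c * aq - bq * dd V x with hvq
        have hvqm : Measurable vq := by
          apply Measurable.sub
          · exact (measurable_const.indicator measurableSet_Iic).const_mul c |>.sub
              measurable_const
          · exact (measurable_dd hVm).const_mul bq
        have hvqb : ∀ x, |vq x| ≤ 1 := by
          intro x
          have h1 : |c * (Set.Iic (q:ℝ)).indicator (fun _ => (1:ℝ)) x| ≤ 1/4 := by
            by_cases hx : x ∈ Set.Iic (q:ℝ)
            · rw [Set.indicator_of_mem hx, mul_one, abs_of_nonneg hcb.1]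
              exact hcb.2
            · rw [Set.indicator_of_notMem hx, mul_zero, abs_zero]
              norm_num
          have h2 : |c * aq| ≤ 1/4 := by
            have := mul_abs_le (show |c| ≤ 1/4 by rw [abs_of_nonneg hcb.1]; exact hcb.2)
              (haqb q)
            calc |c * aq| ≤ 1/4 * 1 := this
              _ = 1/4 := by norm_num
          have h3 : |bq * dd V x| ≤ 1/4 := by
            have := mul_abs_le (hbqb q) (dd_bound hVb x)
            calc |bq * dd V x| ≤ 1/2 * (1/2) := this
              _ = 1/4 := by norm_num
          have e1 := abs_le.mp h1
          have e2 := abs_le.mp h2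
          have e3 := abs_le.mp h3
          have hx0 : vq x = c * (Set.Iic (q:ℝ)).indicator (fun _ => (1:ℝ)) x
              - c * aq - bq * dd V x := rfl
          rw [hx0, abs_le]
          constructor
          · linarith [e1.1, e2.2, e3.2]
          · linarith [e1.2, e2.1, e3.1]
        -- ∫ of the indicator of const 1 equals aq
        have hinta : ∫ x, (Set.Iic (q:ℝ)).indicator (fun _ => (1:ℝ)) x ∂m01 = aq := by
          rw [integral_indicator measurableSet_Iic, setIntegral_const]
          simp [haq, Measure.real]
        have hintb : ∫ x, (Set.Iic (q:ℝ)).indicator (fun _ => (1:ℝ)) x * dd V x ∂m01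
            = bq := by
          rw [hbq]
          apply integral_congr_ae
          apply Filter.Eventually.of_forall
          intro x
          by_cases hx : x ∈ Set.Iic (q:ℝ) <;>
            simp [Set.indicator_of_mem, Set.indicator_of_notMem, hx]
        have hintd : Integrable (fun x => (Set.Iic (q:ℝ)).indicator (fun _ => (1:ℝ)) x) m01 := by
          apply intg (measurable_const.indicator measurableSet_Iic).aestronglyMeasurable
            (C := 1)
          intro x
          by_cases hx : x ∈ Set.Iic (q:ℝ) <;>
            simp [Set.indicator_of_mem, Set.indicator_of_notMem, hx]
        have h1 : c * ∫ x, vq x ∂m01 = 0 := by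
          have : ∫ x, vq x ∂m01 = 0 := by
            rw [hvq]
            have hsplit : ∀ x, c * (Set.Iic (q:ℝ)).indicator (fun _ => (1:ℝ)) x
                - c * aq - bq * dd V x
                = c * (Set.Iic (q:ℝ)).indicator (fun _ => (1:ℝ)) x + (- (c * aq))
                  + dd V x * (- bq) := fun x => by ring
            rw [integral_congr_ae (Filter.Eventually.of_forall hsplit),
              int_add3 (hintd.const_mul c) (integrable_const _)
                (intg_mul (measurable_dd hVm) measurable_const (dd_bound hVb)
                  (fun _ => le_refl _ : ∀ _ : ℝ, |(-bq : ℝ)| ≤ |(-bq : ℝ)|)),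
              integral_const_mul, hinta, integral_mul_const, m0 hVm hVb hVs, integral_const]
            simp only [measure_univ, ENNReal.toReal_one, probReal_univ, smul_eq_mul, one_mul]
            ring
          rw [this, mul_zero]
        have h2 : ∫ x, vq x * dd V x ∂m01 = 0 := by
          have hsplit : ∀ x, vq x * dd V x
              = ((Set.Iic (q:ℝ)).indicator (fun _ => (1:ℝ)) x * dd V x) * c
                + dd V x * (- (c * aq)) + (dd V x)^2 * (- bq) := by
            intro x
            rw [hvq]
            ring
          rw [integral_congr_ae (Filter.Eventually.of_forall hsplit),
            int_add3
              (intg_mul (f := fun x => (Set.Iic (q:ℝ)).indicator (fun _ => (1:ℝ)) x * dd V x) ((measurable_const.indicator measurableSet_Iic).mul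
                  (measurable_dd hVm)) measurable_const
                (C := 1 * (1/2)) (fun x => by
                  refine mul_abs_le ?_ (dd_bound hVb x)
                  by_cases hx : x ∈ Set.Iic (q:ℝ) <;>
                    simp [Set.indicator_of_mem, Set.indicator_of_notMem, hx])
                (fun _ => le_refl _ : ∀ _ : ℝ, |(c : ℝ)| ≤ |(c : ℝ)|))
              (intg_mul (measurable_dd hVm) measurable_const (dd_bound hVb)
                (fun _ => le_refl _ : ∀ _ : ℝ, |(-(c*aq) : ℝ)| ≤ |(-(c*aq) : ℝ)|))
              (intg_mul ((measurable_dd hVm).pow_const 2) measurable_const (dd2_bound hVb)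
                (fun _ => le_refl _ : ∀ _ : ℝ, |(-bq : ℝ)| ≤ |(-bq : ℝ)|)),
            integral_mul_const, integral_mul_const, integral_mul_const,
            hintb, m0 hVm hVb hVs]
          have ecc : ∫ x, (dd V x)^2 ∂m01 = c := rfl
          rw [ecc]
          ring
        exact testA hVm hVb hVs hG vq hvqm hvqb h1 h2
      have hww' : ∀ᵐ y ∂m01, ∀ q : ℚ,
          ∫ x, V x y * (c * (Set.Iic (q:ℝ)).indicator (fun _ => (1:ℝ)) x
            - c * (m01 (Set.Iic (q:ℝ))).toReal
            - (∫ t, (Set.Iic (q:ℝ)).indicator (dd V) t ∂m01) * dd V x) ∂m01 = 0 :=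
        ae_all_iff.mpr hww
      filter_upwards [hww', hqq] with y hy hqy
      -- derive the set-integral conditions for g_y x = V x y + dd y - dd x
      set g : ℝ → ℝ := fun x => V x y + dd V y - dd V x with hg
      have hgm : Measurable g :=
        ((measurable_Vy hVm y).add_const _).sub (measurable_dd hVm)
      have hgb : ∀ x, |g x| ≤ 3/2 := by
        intro x
        have e1 := abs_le.mp (hVb x y)
        have e2 := abs_le.mp (dd_bound hVb y)
        have e3 := abs_le.mp (dd_bound hVb x)
        have hx0 : g x = V x y + dd V y - dd V x := rfl
        rw [hx0, abs_le]
        constructor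
        · linarith [e1.1, e2.1, e3.2]
        · linarith [e1.2, e2.2, e3.1]
      have hgi : Integrable g m01 := intg hgm.aestronglyMeasurable hgb
      have hsq : ∀ q : ℚ, ∫ x in Set.Iic (q:ℝ), g x ∂m01 = 0 := by
        intro q
        set aq := (m01 (Set.Iic (q:ℝ))).toReal with haq
        set bq := ∫ t, (Set.Iic (q:ℝ)).indicator (dd V) t ∂m01 with hbq
        -- expand the hypothesis hy q
        have hyq := hy q
        have hexp : ∫ x, V x y * (c * (Set.Iic (q:ℝ)).indicator (fun _ => (1:ℝ)) x
            - c * aq - bq * dd V x) ∂m01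
            = c * (∫ x, (Set.Iic (q:ℝ)).indicator (fun t => V t y) x ∂m01)
              + c * aq * dd V y + bq * qq V y := by
          have hsplit : ∀ x, V x y * (c * (Set.Iic (q:ℝ)).indicator (fun _ => (1:ℝ)) x
              - c * aq - bq * dd V x)
              = ((Set.Iic (q:ℝ)).indicator (fun t => V t y) x) * c
                + V x y * (-(c*aq)) + (V x y * dd V x) * (-bq) := by
            intro x
            by_cases hx : x ∈ Set.Iic (q:ℝ)
            · rw [Set.indicator_of_mem hx, Set.indicator_of_mem hx]
              ring
            · rw [Set.indicator_of_notMem hx, Set.indicator_of_notMem hx]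
              ring
          rw [integral_congr_ae (Filter.Eventually.of_forall hsplit),
            int_add3
              (intg_mul ((measurable_Vy hVm y).indicator measurableSet_Iic)
                measurable_const (C := 1/2) (fun x => by
                  by_cases hx : x ∈ Set.Iic (q:ℝ)
                  · rw [Set.indicator_of_mem hx]; exact hVb x y
                  · rw [Set.indicator_of_notMem hx]; simp)
                (fun _ => le_refl _ : ∀ _ : ℝ, |(c : ℝ)| ≤ |(c : ℝ)|))
              (intg_mul (measurable_Vy hVm y) measurable_const (fun x => hVb x y)
                (fun _ => le_refl _ : ∀ _ : ℝ, |(-(c*aq) : ℝ)| ≤ |(-(c*aq) : ℝ)|))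
              (intg_mul (f := fun x => V x y * dd V x) ((measurable_Vy hVm y).mul (measurable_dd hVm)) measurable_const
                (fun x => mul_abs_le (hVb x y) (dd_bound hVb x))
                (fun _ => le_refl _ : ∀ _ : ℝ, |(-bq : ℝ)| ≤ |(-bq : ℝ)|)),
            integral_mul_const, integral_mul_const, integral_mul_const,
            int_Vy hVm hVb hVs y, int_Vd hVm hVb hVs y]
          ring
        rw [hexp] at hyq
        -- so (dividing by c): ∫_{Iic q} V x y + aq * dd y - bq = 0
        have hkey : (∫ x, (Set.Iic (q:ℝ)).indicator (fun t => V t y) x ∂m01)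
            + aq * dd V y - bq = 0 := by
          have hc' : c ≠ 0 := hc
          have : c * ((∫ x, (Set.Iic (q:ℝ)).indicator (fun t => V t y) x ∂m01)
              + aq * dd V y - bq) = 0 := by
            rw [hqy] at hyq
            nlinarith [hyq]
          exact (mul_eq_zero.mp this).resolve_left hc'
        -- rewrite as the set integral of g
        have iV : Integrable (fun x => V x y) m01 :=
          intg (measurable_Vy hVm y).aestronglyMeasurable (fun x => hVb x y)
        have iD : Integrable (dd V) m01 :=
          intg (measurable_dd hVm).aestronglyMeasurable (dd_bound hVb)
        have e1 : ∫ x in Set.Iic (q:ℝ), g x ∂m01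
            = (∫ x in Set.Iic (q:ℝ), V x y ∂m01) + aq * dd V y
              - ∫ x in Set.Iic (q:ℝ), dd V x ∂m01 := by
          have s1 : ∫ x in Set.Iic (q:ℝ), g x ∂m01
              = (∫ x in Set.Iic (q:ℝ), (V x y + dd V y) ∂m01)
                - ∫ x in Set.Iic (q:ℝ), dd V x ∂m01 :=
            integral_sub ((iV.add (integrable_const _)).restrict) (iD.restrict)
          have s2 : ∫ x in Set.Iic (q:ℝ), (V x y + dd V y) ∂m01
              = (∫ x in Set.Iic (q:ℝ), V x y ∂m01) + ∫ x in Set.Iic (q:ℝ), dd V y ∂m01 :=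
            integral_add (iV.restrict) ((integrable_const _).restrict)
          have s3 : ∫ x in Set.Iic (q:ℝ), (dd V y : ℝ) ∂m01 = aq * dd V y := by
            rw [setIntegral_const, haq, smul_eq_mul, Measure.real]
          rw [s1, s2, s3]
        have eInd1 : ∫ x, (Set.Iic (q:ℝ)).indicator (fun t => V t y) x ∂m01
            = ∫ x in Set.Iic (q:ℝ), V x y ∂m01 := integral_indicator measurableSet_Iic
        have eInd2 : bq = ∫ x in Set.Iic (q:ℝ), dd V x ∂m01 := by
          rw [hbq]
          exact integral_indicator measurableSet_Iic
        rw [e1, ← eInd1, ← eInd2]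
        linarith [hkey]
      have htot : ∫ x, g x ∂m01 = 0 := by
        have s1 : ∫ x, g x ∂m01
            = (∫ x, (V x y + dd V y) ∂m01) - ∫ x, dd V x ∂m01 := by
          apply integral_sub
          · exact (intg (measurable_Vy hVm y).aestronglyMeasurable
              (fun x => hVb x y)).add (integrable_const _)
          · exact intg (measurable_dd hVm).aestronglyMeasurable (dd_bound hVb)
        have s2 : ∫ x, (V x y + dd V y) ∂m01
            = (∫ x, V x y ∂m01) + ∫ x, (dd V y : ℝ) ∂m01 :=
          integral_add (intg (measurable_Vy hVm y).aestronglyMeasurable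
            (fun x => hVb x y)) (integrable_const _)
        have s3 : ∫ x, (dd V y : ℝ) ∂m01 = dd V y := by
          rw [integral_const]
          simp
        rw [s1, s2, s3, int_Vy hVm hVb hVs y, m0 hVm hVb hVs]
        ring
      have hres := ae_zero_of_rat hgm hgi hsq htot
      filter_upwards [hres] with x hx
      have hx0 : V x y + dd V y - dd V x = 0 := hx
      linarith [hx0]
  -- convert the sectionwise statement into a product-measure statement
  have hmS : MeasurableSet {p : ℝ × ℝ | ¬ (V p.2 p.1 = dd V p.2 - dd V p.1)} := by
    have h1 : Measurable (fun p : ℝ × ℝ => V p.2 p.1) :=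
      hVm.comp (measurable_snd.prodMk measurable_fst)
    have h2 : Measurable (fun p : ℝ × ℝ => dd V p.2 - dd V p.1) :=
      ((measurable_dd hVm).comp measurable_snd).sub ((measurable_dd hVm).comp measurable_fst)
    exact (measurableSet_eq_fun h1 h2).compl
  have hnull : (m01.prod m01) {p : ℝ × ℝ | ¬ (V p.2 p.1 = dd V p.2 - dd V p.1)} = 0 := by
    rw [Measure.measure_prod_null hmS]
    filter_upwards [key] with y hy
    have : Prod.mk y ⁻¹' {p : ℝ × ℝ | ¬ (V p.2 p.1 = dd V p.2 - dd V p.1)}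
        = {x | ¬ (V x y = dd V x - dd V y)} := rfl
    simp only [Pi.zero_apply, this]
    exact hy
  rw [ae_iff]
  have hswap : {p : ℝ × ℝ | ¬ (V p.1 p.2 = dd V p.1 - dd V p.2)}
      = Prod.swap ⁻¹' {p : ℝ × ℝ | ¬ (V p.2 p.1 = dd V p.2 - dd V p.1)} := rfl
  rw [hswap]
  calc (m01.prod m01) (Prod.swap ⁻¹' {p : ℝ × ℝ | ¬ (V p.2 p.1 = dd V p.2 - dd V p.1)})
      = (Measure.map Prod.swap (m01.prod m01))
          {p : ℝ × ℝ | ¬ (V p.2 p.1 = dd V p.2 - dd V p.1)} :=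
        (Measure.map_apply measurable_swap hmS).symm
    _ = (m01.prod m01) {p : ℝ × ℝ | ¬ (V p.2 p.1 = dd V p.2 - dd V p.1)} := by
        rw [Measure.prod_swap]
    _ = 0 := hnull

end VSec2

end Stmt15

namespace Stmt15

lemma ae_lift_fst {P : ℝ → Prop} (h : ∀ᵐ x ∂m01, P x) :
    ∀ᵐ p : ℝ × ℝ ∂(m01.prod m01), P p.1 := by
  rw [ae_iff] at h ⊢
  have hsub : {p : ℝ × ℝ | ¬ P p.1} = {x | ¬ P x} ×ˢ (Set.univ : Set ℝ) := by
    ext p; simp [Set.mem_prod]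
  rw [hsub, Measure.prod_prod, h, zero_mul]

lemma ae_lift_snd {P : ℝ → Prop} (h : ∀ᵐ x ∂m01, P x) :
    ∀ᵐ p : ℝ × ℝ ∂(m01.prod m01), P p.2 := by
  rw [ae_iff] at h ⊢
  have hsub : {p : ℝ × ℝ | ¬ P p.2} = (Set.univ : Set ℝ) ×ˢ {x | ¬ P x} := by
    ext p; simp [Set.mem_prod]
  rw [hsub, Measure.prod_prod, h, mul_zero]

lemma construct_f {D : ℝ → ℝ} (hDm : Measurable D) (hDb : ∀ x, |D x| ≤ 1/2)
    (hosc : ∀ᵐ p : ℝ × ℝ ∂(m01.prod m01), |D p.1 - D p.2| ≤ 1/2) :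
    ∃ f : ℝ → ℝ, Measurable f ∧ (∀ x, f x ∈ Set.Icc (0:ℝ) (1/2)) ∧
      ∀ᵐ x ∂m01, f x = D x - sSup {r : ℝ | m01 {x | D x < r} = 0} := by
  set R := {r : ℝ | m01 {x | D x < r} = 0} with hR
  have hRne : R.Nonempty := by
    refine ⟨-1, ?_⟩
    have : {x | D x < -1} = ∅ := by
      ext x
      simp only [Set.mem_setOf_eq, Set.mem_empty_iff_false, iff_false, not_lt]
      have := abs_le.mp (hDb x)
      linarith [this.1]
    simp [hR, this]
  have hRbdd : BddAbove R := by
    refine ⟨2, fun r hr => ?_⟩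
    by_contra hlt
    push_neg at hlt
    have huniv : {x | D x < r} = Set.univ := by
      ext x
      simp only [Set.mem_setOf_eq, Set.mem_univ, iff_true]
      have := abs_le.mp (hDb x)
      linarith [this.2]
    have : m01 {x | D x < r} = 1 := by rw [huniv]; exact measure_univ
    rw [hR] at hr
    simp only [Set.mem_setOf_eq] at hr
    rw [hr] at this
    exact zero_ne_one this
  set t := sSup R with ht
  have hlow : ∀ᵐ x ∂m01, t ≤ D x := by
    rw [ae_iff]
    have hsub : {x | ¬ t ≤ D x} ⊆ ⋃ n : ℕ, {x | D x < t - 1/(n+1)} := by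
      intro x hx
      simp only [Set.mem_setOf_eq, not_le] at hx
      obtain ⟨n, hn⟩ := exists_nat_gt (1 / (t - D x))
      have hpos : 0 < t - D x := by linarith
      have hn0 : (0:ℝ) < n + 1 := by positivity
      refine Set.mem_iUnion.mpr ⟨n, ?_⟩
      simp only [Set.mem_setOf_eq]
      have h1 : 1 / (t - D x) < n + 1 := by linarith
      have h2 : 1 / ((n:ℝ)+1) < t - D x := by
        rw [div_lt_iff₀ hn0]
        rw [div_lt_iff₀ hpos] at h1
        nlinarith
      linarith
    apply measure_mono_null hsub
    apply measure_iUnion_null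
    intro n
    have hn0 : (0:ℝ) < 1/((n:ℝ)+1) := by positivity
    obtain ⟨r, hrR, hrgt⟩ := exists_lt_of_lt_csSup hRne (show t - 1/((n:ℝ)+1) < t by linarith)
    refine measure_mono_null ?_ hrR
    intro x hx
    simp only [Set.mem_setOf_eq] at hx ⊢
    linarith
  have hhigh : ∀ᵐ x ∂m01, D x ≤ t + 1/2 := by
    rw [ae_iff]
    by_contra hne
    have hsub : {x | ¬ D x ≤ t + 1/2} = ⋃ n : ℕ, {x | t + 1/2 + 1/(n+1) < D x} := by
      ext x
      simp only [Set.mem_setOf_eq, not_le, Set.mem_iUnion]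
      constructor
      · intro hx
        obtain ⟨n, hn⟩ := exists_nat_gt (1 / (D x - (t + 1/2)))
        have hpos : 0 < D x - (t + 1/2) := by linarith
        have hn0 : (0:ℝ) < n + 1 := by positivity
        refine ⟨n, ?_⟩
        have h1 : 1 / (D x - (t+1/2)) < n + 1 := by linarith
        have h2 : 1 / ((n:ℝ)+1) < D x - (t+1/2) := by
          rw [div_lt_iff₀ hn0]
          rw [div_lt_iff₀ hpos] at h1
          nlinarith
        linarith
      · intro ⟨n, hn⟩
        have hn0 : (0:ℝ) < 1/((n:ℝ)+1) := by positivity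
        linarith
    rw [hsub] at hne
    have hex : ∃ n : ℕ, m01 {x | t + 1/2 + 1/((n:ℝ)+1) < D x} ≠ 0 := by
      by_contra hall
      push_neg at hall
      exact hne (measure_iUnion_null hall)
    obtain ⟨n, hn⟩ := hex
    set ε := 1/((n:ℝ)+1) with hε
    have hε0 : 0 < ε := by positivity
    set A := {x | t + 1/2 + ε < D x} with hA
    set B := {x | D x < t + ε/2} with hB
    have hBpos : m01 B ≠ 0 := by
      intro h0
      have : t + ε/2 ∈ R := h0
      have := le_csSup hRbdd this
      linarith
    have hprodpos : (m01.prod m01) (A ×ˢ B) ≠ 0 := by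
      rw [Measure.prod_prod]
      exact mul_ne_zero hn hBpos
    have hprodnull : (m01.prod m01) (A ×ˢ B) = 0 := by
      rw [ae_iff] at hosc
      refine measure_mono_null ?_ hosc
      intro p hp
      simp only [Set.mem_prod, hA, hB, Set.mem_setOf_eq] at hp
      simp only [Set.mem_setOf_eq, not_le]
      rw [lt_abs]
      left
      linarith [hp.1, hp.2]
    exact hprodpos hprodnull
  refine ⟨fun x => max 0 (min (D x - t) (1/2)), ?_, ?_, ?_⟩
  · exact measurable_const.max ((hDm.sub_const t).min measurable_const)
  · intro x
    constructor
    · exact le_max_left _ _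
    · apply max_le (by norm_num)
      exact (min_le_right _ _)
  · filter_upwards [hlow, hhigh] with x h1 h2
    rw [min_eq_left (by linarith), max_eq_right (by linarith)]

end Stmt15

namespace Stmt15

section VSec3

variable {V : ℝ → ℝ → ℝ} (hVm : Measurable (uncurry V)) (hVb : ∀ x y, |V x y| ≤ 1/2)
  (hVs : ∀ x y, V x y = - V y x)

include hVm hVb hVs

lemma reverse_V {f : ℝ → ℝ} (hfm : Measurable f) (hfb : ∀ x, f x ∈ Set.Icc (0:ℝ) (1/2))
    (hae : ∀ᵐ p : ℝ × ℝ ∂(m01.prod m01), V p.1 p.2 = f p.1 - f p.2) :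
    cc V = ∫ x, (f x - ∫ u, f u ∂m01)^2 ∂m01 ∧
    S2 V = 2 * (∫ x, (f x - ∫ u, f u ∂m01)^2 ∂m01)^2 := by
  have hfb' : ∀ x, |f x| ≤ 1/2 := fun x => abs_le.mpr ⟨by linarith [(hfb x).1], (hfb x).2⟩
  have hfi : Integrable f m01 := intg hfm.aestronglyMeasurable hfb'
  set M := ∫ u, f u ∂m01 with hM
  have hMb : |M| ≤ 1/2 := abs_int_le hVb hfb'
  have hgb : ∀ x, |f x - M| ≤ 1 := by
    intro x
    have e1 := abs_le.mp (hfb' x)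
    have e2 := abs_le.mp hMb
    rw [abs_le]
    exact ⟨by linarith [e1.1, e2.2], by linarith [e1.2, e2.1]⟩
  set σ2 := ∫ x, (f x - M)^2 ∂m01 with hσ2
  have hσ2b : |σ2| ≤ 1 := by
    have := abs_int_le hVb (f := fun x => (f x - M)^2) (C := 1)
      (fun x => by
        have := sq_bound_of (f := fun x => f x - M) (C := 1) hgb x
        simpa using this)
    simpa using this
  have hgm : Measurable (fun x => f x - M) := hfm.sub_const M
  have hg2i : Integrable (fun x => (f x - M)^2) m01 :=
    intg (hgm.pow_const 2).aestronglyMeasurable (sq_bound_of hgb)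
  have hgi : Integrable (fun x => f x - M) m01 := intg hgm.aestronglyMeasurable hgb
  have hg0 : ∫ x, (f x - M) ∂m01 = 0 := by
    rw [integral_sub hfi (integrable_const _), integral_const]
    simp [hM]
  have hf2i : Integrable (fun x => (f x)^2) m01 :=
    intg (hfm.pow_const 2).aestronglyMeasurable
      ((by norm_num : ((1:ℝ)/2)^2 = 1/4) ▸ sq_bound_of hfb')
  have hsec : ∀ᵐ x ∂m01, ∀ᵐ y ∂m01, V x y = f x - f y := Measure.ae_ae_of_ae_prod hae
  have hdd : ∀ᵐ x ∂m01, dd V x = f x - M := by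
    filter_upwards [hsec] with x hx
    have e1 : dd V x = ∫ y, (f x - f y) ∂m01 := integral_congr_ae hx
    rw [e1, integral_sub (integrable_const _) hfi, integral_const]
    simp [hM]
  have hcc : cc V = σ2 := by
    apply integral_congr_ae
    filter_upwards [hdd] with x hx
    rw [hx]
  -- the two-point integral
  have hσ2' : σ2 = (∫ x, (f x)^2 ∂m01) - M^2 := by
    have hpt : ∀ x, (f x - M)^2 = (f x)^2 + f x * (-(2*M)) + M^2 := fun x => by ring
    rw [hσ2, integral_congr_ae (Filter.Eventually.of_forall hpt),
      int_add3 hf2i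
        (intg_mul hfm measurable_const hfb' (fun _ => le_refl _)) (integrable_const _),
      integral_mul_const, integral_const]
    simp only [measure_univ, ENNReal.toReal_one, probReal_univ, smul_eq_mul, one_mul]
    rw [← hM]
    ring
  have hint : ∀ A B : ℝ, ∫ u, (A - f u) * (B - f u) ∂m01 = (A - M)*(B - M) + σ2 := by
    intro A B
    have hpt : ∀ u, (A - f u) * (B - f u) = (A*B : ℝ) + f u * (-(A+B)) + (f u)^2 :=
      fun u => by ring
    rw [integral_congr_ae (Filter.Eventually.of_forall hpt),
      int_add3 (integrable_const _)
        (intg_mul hfm measurable_const hfb' (fun _ => le_refl _)) hf2i]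
    have e1 : ∫ _z : ℝ, (A*B : ℝ) ∂m01 = A*B := by
      rw [integral_const]; simp
    have e2 : ∫ z, f z * (-(A+B)) ∂m01 = M * (-(A+B)) := by
      rw [integral_mul_const, ← hM]
    rw [e1, e2]
    linear_combination -hσ2'
  have hGf : ∀ᵐ p : ℝ × ℝ ∂(m01.prod m01),
      GG V p.1 p.2 = (f p.1 - M)*(f p.2 - M) + σ2 := by
    filter_upwards [ae_lift_fst hsec, ae_lift_snd hsec] with p h1 h2
    have e1 : GG V p.1 p.2 = ∫ u, (f p.1 - f u) * (f p.2 - f u) ∂m01 := by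
      apply integral_congr_ae
      filter_upwards [h1, h2] with u e1 e2
      rw [e1, e2]
    rw [e1, hint]
  have hS2 : S2 V = 2 * σ2^2 := by
    have hGsec := Measure.ae_ae_of_ae_prod hGf
    have hinner : ∀ᵐ x ∂m01, ∫ u, (GG V x u)^2 ∂m01 = (f x - M)^2 * σ2 + σ2^2 := by
      filter_upwards [hGsec] with x hx
      have e1 : ∫ u, (GG V x u)^2 ∂m01
          = ∫ u, ((f x - M)*(f u - M) + σ2)^2 ∂m01 := by
        apply integral_congr_ae
        filter_upwards [hx] with u hu
        rw [hu]
      rw [e1]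
      have hpt : ∀ u, ((f x - M)*(f u - M) + σ2)^2
          = (f u - M)^2 * ((f x - M)^2) + (f u - M) * (2*σ2*(f x - M)) + σ2^2 :=
        fun u => by ring
      rw [integral_congr_ae (Filter.Eventually.of_forall hpt),
        int_add3
          (intg_mul (hgm.pow_const 2) measurable_const (sq_bound_of hgb)
            (fun _ => le_refl _))
          (intg_mul hgm measurable_const hgb (fun _ => le_refl _))
          (integrable_const _),
        integral_mul_const, integral_mul_const, hg0, integral_const]
      simp only [measure_univ, ENNReal.toReal_one, probReal_univ, smul_eq_mul, one_mul]
      rw [← hσ2]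
      ring
    have e2 : S2 V = ∫ x, ((f x - M)^2 * σ2 + σ2^2) ∂m01 := integral_congr_ae hinner
    rw [e2, integral_add
        (intg_mul (hgm.pow_const 2) measurable_const (sq_bound_of hgb)
          (fun _ => le_refl _))
        (integrable_const _),
      integral_mul_const, integral_const]
    simp only [measure_univ, ENNReal.toReal_one, probReal_univ, smul_eq_mul, one_mul]
    rw [← hσ2]
    ring
  exact ⟨hcc, hS2⟩

end VSec3

end Stmt15

namespace Stmt15

lemma tri_congr {F G : ℝ → ℝ → ℝ → ℝ}
    (h : ∀ x ∈ Set.Icc (0:ℝ) 1, ∀ y ∈ Set.Icc (0:ℝ) 1, ∀ z ∈ Set.Icc (0:ℝ) 1,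
      F x y z = G x y z) :
    ∫ x, ∫ y, ∫ z, F x y z ∂m01 ∂m01 ∂m01 = ∫ x, ∫ y, ∫ z, G x y z ∂m01 ∂m01 ∂m01 := by
  have hmem : ∀ᵐ x ∂m01, x ∈ Set.Icc (0:ℝ) 1 :=
    ae_restrict_mem measurableSet_Icc
  apply integral_congr_ae
  filter_upwards [hmem] with x hx
  apply integral_congr_ae
  filter_upwards [hmem] with y hy
  apply integral_congr_ae
  filter_upwards [hmem] with z hz
  exact h x hx y hy z hz

lemma quad_congr {F G : ℝ → ℝ → ℝ → ℝ → ℝ}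
    (h : ∀ x ∈ Set.Icc (0:ℝ) 1, ∀ y ∈ Set.Icc (0:ℝ) 1, ∀ z ∈ Set.Icc (0:ℝ) 1,
      ∀ u ∈ Set.Icc (0:ℝ) 1, F x y z u = G x y z u) :
    ∫ x, ∫ y, ∫ z, ∫ u, F x y z u ∂m01 ∂m01 ∂m01 ∂m01
      = ∫ x, ∫ y, ∫ z, ∫ u, G x y z u ∂m01 ∂m01 ∂m01 ∂m01 := by
  have hmem : ∀ᵐ x ∂m01, x ∈ Set.Icc (0:ℝ) 1 :=
    ae_restrict_mem measurableSet_Icc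
  apply integral_congr_ae
  filter_upwards [hmem] with x hx
  apply integral_congr_ae
  filter_upwards [hmem] with y hy
  apply integral_congr_ae
  filter_upwards [hmem] with z hz
  apply integral_congr_ae
  filter_upwards [hmem] with u hu
  exact h x hx y hy z hz u hu

end Stmt15

/-- The density of the directed triangle C₃ in a tournament limit. -/
noncomputable def cycle3Density (W : ℝ → ℝ → ℝ) : ℝ :=
  ∫ x in Set.Icc (0:ℝ) 1, ∫ y in Set.Icc (0:ℝ) 1, ∫ z in Set.Icc (0:ℝ) 1,
    W x y * W y z * W z x

/-- The density of the directed four-cycle C₄ in a tournament limit. -/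
noncomputable def cycle4Density (W : ℝ → ℝ → ℝ) : ℝ :=
  ∫ x in Set.Icc (0:ℝ) 1, ∫ y in Set.Icc (0:ℝ) 1, ∫ z in Set.Icc (0:ℝ) 1,
    ∫ u in Set.Icc (0:ℝ) 1, W x y * W y z * W z u * W u x

open Stmt15 in
/-- Characterization of the extremal tournament limits in the two-part regime. -/
theorem stmt_15 (W : ℝ → ℝ → ℝ)
    (hmeas : Measurable (Function.uncurry W))
    (hrange : ∀ x ∈ Set.Icc (0:ℝ) 1, ∀ y ∈ Set.Icc (0:ℝ) 1, W x y ∈ Set.Icc (0:ℝ) 1)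
    (hsym : ∀ x ∈ Set.Icc (0:ℝ) 1, ∀ y ∈ Set.Icc (0:ℝ) 1, W x y + W y x = 1)
    (z : ℝ) (hz : 1/2 ≤ z) (hz1 : z ≤ 1)
    (h3 : cycle3Density W = (z ^ 3 + (1 - z) ^ 3) / 8) :
    cycle4Density W = (z ^ 4 + (1 - z) ^ 4) / 16 ↔
      ∃ f : ℝ → ℝ, Measurable f ∧
        (∀ x ∈ Set.Icc (0:ℝ) 1, f x ∈ Set.Icc (0:ℝ) (1/2)) ∧
        (∀ᵐ p : ℝ × ℝ
            ∂(volume.restrict ((Set.Icc (0:ℝ) 1) ×ˢ (Set.Icc (0:ℝ) 1))),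
          W p.1 p.2 = 1/2 + f p.1 - f p.2) := by
  classical
  set V : ℝ → ℝ → ℝ := fun x y =>
    (if x ∈ Set.Icc (0:ℝ) 1 ∧ y ∈ Set.Icc (0:ℝ) 1 then W x y else 1/2) - 1/2 with hVdef
  have hVm : Measurable (Function.uncurry V) := by
    apply Measurable.sub _ measurable_const
    have hset : MeasurableSet {p : ℝ × ℝ | p.1 ∈ Set.Icc (0:ℝ) 1 ∧ p.2 ∈ Set.Icc (0:ℝ) 1} := by
      exact (measurable_fst measurableSet_Icc).inter (measurable_snd measurableSet_Icc)
    exact Measurable.ite hset hmeas measurable_const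
  have hVb : ∀ x y, |V x y| ≤ 1/2 := by
    intro x y
    rw [hVdef]
    simp only
    by_cases h : x ∈ Set.Icc (0:ℝ) 1 ∧ y ∈ Set.Icc (0:ℝ) 1
    · rw [if_pos h]
      have := hrange x h.1 y h.2
      rw [abs_le]
      exact ⟨by linarith [this.1], by linarith [this.2]⟩
    · rw [if_neg h]
      simp
  have hVs : ∀ x y, V x y = - V y x := by
    intro x y
    rw [hVdef]
    simp only
    by_cases h : x ∈ Set.Icc (0:ℝ) 1 ∧ y ∈ Set.Icc (0:ℝ) 1
    · rw [if_pos h, if_pos ⟨h.2, h.1⟩]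
      have := hsym x h.1 y h.2
      linarith
    · have h' : ¬ (y ∈ Set.Icc (0:ℝ) 1 ∧ x ∈ Set.Icc (0:ℝ) 1) := fun hc => h ⟨hc.2, hc.1⟩
      rw [if_neg h, if_neg h']
      ring
  have hWV : ∀ x ∈ Set.Icc (0:ℝ) 1, ∀ y ∈ Set.Icc (0:ℝ) 1, W x y = 1/2 + V x y := by
    intro x hx y hy
    rw [hVdef]
    simp only
    rw [if_pos ⟨hx, hy⟩]
    ring
  -- identify the cycle densities
  have h3' : cycle3Density W = 1/8 - (3/2) * cc V := by
    have e0 : cycle3Density W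
        = ∫ x, ∫ y, ∫ z, W x y * W y z * W z x ∂m01 ∂m01 ∂m01 := rfl
    rw [e0, tri_congr (G := fun x y z => (1/2 + V x y) * (1/2 + V y z) * (1/2 + V z x))
      (fun x hx y hy z hz => by
        rw [hWV x hx y hy, hWV y hy z hz, hWV z hz x hx]),
      E3lem hVm hVb hVs]
  have h4' : cycle4Density W = 1/16 - cc V + S2 V := by
    have e0 : cycle4Density W
        = ∫ x, ∫ y, ∫ z, ∫ u, W x y * W y z * W z u * W u x ∂m01 ∂m01 ∂m01 ∂m01 := rfl
    rw [e0, quad_congr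
      (G := fun x y z u => (1/2 + V x y) * (1/2 + V y z) * (1/2 + V z u) * (1/2 + V u x))
      (fun x hx y hy z hz u hu => by
        rw [hWV x hx y hy, hWV y hy z hz, hWV z hz u hu, hWV u hu x hx]),
      E4lem hVm hVb hVs]
  -- pin down cc V
  have hceq : cycle3Density W = (z ^ 3 + (1 - z) ^ 3) / 8 := h3
  rw [h3'] at hceq
  have hcval : cc V = z*(1-z)/4 := by linear_combination (-(2:ℝ)/3) * hceq
  have hmeas_eq :
      volume.restrict ((Set.Icc (0:ℝ) 1) ×ˢ (Set.Icc (0:ℝ) 1)) = m01.prod m01 := by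
    rw [Measure.volume_eq_prod, ← Measure.prod_restrict]
    rfl
  have hmemI : ∀ᵐ x ∂m01, x ∈ Set.Icc (0:ℝ) 1 := ae_restrict_mem measurableSet_Icc
  constructor
  · intro h4
    rw [h4'] at h4
    have hS : S2 V = 2 * (cc V)^2 := by
      rw [hcval]
      linear_combination h4 + hcval
    have hVae := forward_V hVm hVb hVs hS
    have hosc : ∀ᵐ p : ℝ × ℝ ∂(m01.prod m01), |dd V p.1 - dd V p.2| ≤ 1/2 := by
      filter_upwards [hVae] with p hp
      rw [← hp]
      exact hVb p.1 p.2
    obtain ⟨f, hfm, hfr, hfae⟩ := construct_f (measurable_dd hVm) (dd_bound hVb) hosc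
    refine ⟨f, hfm, fun x _ => hfr x, ?_⟩
    rw [hmeas_eq]
    filter_upwards [hVae, ae_lift_fst hfae, ae_lift_snd hfae, ae_lift_fst hmemI,
      ae_lift_snd hmemI] with p h1 h2 h3 h4 h5
    rw [hWV p.1 h4 p.2 h5, h1, h2, h3]
    ring
  · rintro ⟨f, hfm, hfr, hfae⟩
    set f' : ℝ → ℝ := fun x => max 0 (min (f x) (1/2)) with hf'
    have hf'm : Measurable f' := measurable_const.max (hfm.min measurable_const)
    have hf'r : ∀ x, f' x ∈ Set.Icc (0:ℝ) (1/2) := by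
      intro x
      constructor
      · exact le_max_left _ _
      · exact max_le (by norm_num) (min_le_right _ _)
    have hf'f : ∀ x ∈ Set.Icc (0:ℝ) 1, f' x = f x := by
      intro x hx
      have := hfr x hx
      rw [hf']
      simp only
      rw [min_eq_left this.2, max_eq_right this.1]
    rw [hmeas_eq] at hfae
    have hae' : ∀ᵐ p : ℝ × ℝ ∂(m01.prod m01), V p.1 p.2 = f' p.1 - f' p.2 := by
      filter_upwards [hfae, ae_lift_fst hmemI, ae_lift_snd hmemI] with p h1 h2 h3
      rw [hf'f p.1 h2, hf'f p.2 h3]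
      have := hWV p.1 h2 p.2 h3
      rw [this] at h1
      linear_combination h1
    obtain ⟨hcc, hS2⟩ := reverse_V hVm hVb hVs hf'm hf'r hae'
    rw [h4', hS2, ← hcc, hcval]
    linear_combination (0:ℝ)
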